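/- arXiv:2407.03072 — 8 statements merged into one kernel-verified Lean document; each statement's English description precedes it below -/
import Mathlib

section
/- Let x̂ be the minimizer of f(x) = (1/2)x^T H x + c^T x over the affine subspace x_0 + S, where S is spanned by nonzero mutually H-conjugate vectors q_0,...,q_{k-1}. For any x ∈ x_0 + S, the unique vector p ∈ S with x + p = x̂ is p = Σ_{i=0}^{k-1} β_i q_i with β_i = -(g(x)^T q_i)/(q_i^T H q_i), where g(x) = H x + c. -/
open Matrix

theorem subspace_newton_step_formula {n k : ℕ}
    (H : Matrix (Fin n) (Fin n) ℝ) (hH : H.PosDef)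
    (c x0 : Fin n → ℝ)
    (q : Fin k → (Fin n → ℝ))
    (hq : ∀ i, q i ≠ 0)
    (hconj : ∀ i j, i ≠ j → q i ⬝ᵥ H.mulVec (q j) = 0)
    (S : Submodule ℝ (Fin n → ℝ)) (hS : S = Submodule.span ℝ (Set.range q))
    (f : (Fin n → ℝ) → ℝ)
    (hf : ∀ x, f x = (1 / 2) * (x ⬝ᵥ H.mulVec x) + c ⬝ᵥ x)
    (xhat : Fin n → ℝ) (hxhatS : xhat - x0 ∈ S)
    (hxhatmin : ∀ y : Fin n → ℝ, y - x0 ∈ S → f xhat ≤ f y)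
    (x : Fin n → ℝ) (hx : x - x0 ∈ S)
    (g : Fin n → ℝ) (hg : g = H.mulVec x + c) (β : Fin k → ℝ)
    (hβ : ∀ i : Fin k, β i = -(g ⬝ᵥ q i) / (q i ⬝ᵥ H.mulVec (q i))) :
    x + ∑ i, β i • q i = xhat := by
  -- symmetry of the bilinear form
  have hsym : ∀ u v : Fin n → ℝ, u ⬝ᵥ H.mulVec v = v ⬝ᵥ H.mulVec u := by
    intro u v
    have hHt : Hᵀ = H := by
      rw [← conjTranspose_eq_transpose_of_trivial]; exact hH.isHermitian
    rw [dotProduct_mulVec, ← mulVec_transpose, hHt]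
    exact dotProduct_comm _ _
  -- positivity on q i
  have hpos : ∀ i, 0 < q i ⬝ᵥ H.mulVec (q i) := by
    intro i
    have := hH.dotProduct_mulVec_pos (hq i)
    simpa using this
  -- orthogonality of gradient at xhat to each q i
  have horth : ∀ i, (H.mulVec xhat + c) ⬝ᵥ q i = 0 := by
    intro i
    set a := q i ⬝ᵥ H.mulVec (q i) with ha
    set b := (H.mulVec xhat + c) ⬝ᵥ q i with hb
    have key : ∀ t : ℝ, 0 ≤ t * b + t ^ 2 / 2 * a := by
      intro t
      have hmem : xhat + t • q i - x0 ∈ S := by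
        have h1 : xhat + t • q i - x0 = (xhat - x0) + t • q i := by ring_nf
        rw [h1]
        exact S.add_mem hxhatS (S.smul_mem t (hS ▸ Submodule.subset_span ⟨i, rfl⟩))
      have := hxhatmin _ hmem
      rw [hf, hf] at this
      have expand : (xhat + t • q i) ⬝ᵥ H.mulVec (xhat + t • q i)
          = xhat ⬝ᵥ H.mulVec xhat + 2 * t * (xhat ⬝ᵥ H.mulVec (q i)) + t ^ 2 * a := by
        rw [mulVec_add, mulVec_smul, dotProduct_add, add_dotProduct, add_dotProduct,
          dotProduct_smul, smul_dotProduct, dotProduct_smul, smul_dotProduct,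
          hsym (q i) xhat]
        simp [ha, smul_eq_mul]
        ring
      have expc : c ⬝ᵥ (xhat + t • q i) = c ⬝ᵥ xhat + t * (c ⬝ᵥ q i) := by
        rw [dotProduct_add, dotProduct_smul]; simp [smul_eq_mul]
      rw [expand, expc] at this
      have hb' : b = xhat ⬝ᵥ H.mulVec (q i) + c ⬝ᵥ q i := by
        rw [hb, add_dotProduct, dotProduct_comm (H.mulVec xhat) (q i), hsym (q i) xhat]
      rw [hb']
      nlinarith [this]
    -- from key and a > 0 deduce b = 0
    have ha' := hpos i
    by_contra hbne
    have := key (-b / a)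
    have h2 : (-b / a) * b + (-b / a) ^ 2 / 2 * a = -(b ^ 2) / (2 * a) := by
      field_simp
      ring
    rw [h2] at this
    have h3 : (0:ℝ) < 2 * a := by linarith
    have h5 : 0 ≤ -(b ^ 2) / (2 * a) * (2 * a) := mul_nonneg this (le_of_lt h3)
    have h6 : -(b ^ 2) / (2 * a) * (2 * a) = -(b ^ 2) := by rw [div_mul_cancel₀ _ (ne_of_gt h3)]
    rw [h6] at h5
    have : b = 0 := by nlinarith [sq_nonneg b]
    exact hbne this
  -- express xhat - x as a combination of the q i
  have hmem : xhat - x ∈ Submodule.span ℝ (Set.range q) := by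
    rw [← hS]
    have : xhat - x = (xhat - x0) - (x - x0) := by ring_nf
    rw [this]; exact S.sub_mem hxhatS hx
  obtain ⟨α, hα⟩ := (Submodule.mem_span_range_iff_exists_fun ℝ).mp hmem
  -- compute g ⬝ᵥ q i
  have hgq : ∀ i, g ⬝ᵥ q i = -(α i * (q i ⬝ᵥ H.mulVec (q i))) := by
    intro i
    have h1 : g ⬝ᵥ q i = (H.mulVec xhat + c) ⬝ᵥ q i - (H.mulVec (xhat - x)) ⬝ᵥ q i := by
      rw [hg]
      rw [mulVec_sub]
      simp [add_dotProduct, sub_dotProduct]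
      ring
    rw [h1, horth i]
    rw [← hα]
    have h2 : H.mulVec (∑ j, α j • q j) ⬝ᵥ q i = ∑ j, α j * (q j ⬝ᵥ H.mulVec (q i)) := by
      rw [dotProduct_comm, hsym]
      simp only [dotProduct, Finset.sum_apply, Pi.smul_apply, smul_eq_mul,
        Finset.sum_mul, Finset.mul_sum]
      rw [Finset.sum_comm]
      apply Finset.sum_congr rfl; intro j _
      apply Finset.sum_congr rfl; intro m _
      ring
    rw [h2]
    rw [Finset.sum_eq_single i]
    · ring
    · intro j _ hji
      rw [hconj j i hji]; ring
    · intro h; exact absurd (Finset.mem_univ i) h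
  -- conclude β = α
  have hβα : ∀ i, β i = α i := by
    intro i
    rw [hβ, hgq i, neg_neg]
    exact mul_div_cancel_right₀ _ (ne_of_gt (hpos i))
  have : ∑ i, β i • q i = xhat - x := by
    rw [← hα]; congr 1; ext i; rw [hβα]
  rw [this]; ring_nf
end

section
/- Let H be symmetric positive definite and let r be the smallest integer with K_r(g_0,H) = K_{r+1}(g_0,H), where g_0 = H x_0 + c. Then the minimizer of f(x) = (1/2)x^T H x + c^T x over the affine subspace x_0 + K_r(g_0,H) equals the global minimizer x* = -H^{-1}c of f. -/
open Matrix

def krylov {n : ℕ} (b : Fin n → ℝ) (A : Matrix (Fin n) (Fin n) ℝ) (k : ℕ) :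
    Submodule ℝ (Fin n → ℝ) :=
  Submodule.span ℝ (Set.range fun i : Fin k => (A ^ (i : ℕ)).mulVec b)

theorem krylov_minimizer_is_global {n : ℕ}
    (H : Matrix (Fin n) (Fin n) ℝ) (hH : H.PosDef)
    (c x0 : Fin n → ℝ) (g0 : Fin n → ℝ) (hg0 : g0 = H.mulVec x0 + c)
    (r : ℕ) (hr : krylov g0 H r = krylov g0 H (r + 1))
    (hrmin : ∀ s : ℕ, s < r → krylov g0 H s ≠ krylov g0 H (s + 1))
    (f : (Fin n → ℝ) → ℝ)
    (hf : ∀ x, f x = (1 / 2) * (x ⬝ᵥ H.mulVec x) + c ⬝ᵥ x)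
    (xhat : Fin n → ℝ) (hxhatS : xhat - x0 ∈ krylov g0 H r)
    (hxhatmin : ∀ y : Fin n → ℝ, y - x0 ∈ krylov g0 H r → f xhat ≤ f y) :
    xhat = -(H⁻¹.mulVec c) := by
  have hdet : IsUnit H.det := hH.det_pos.ne'.isUnit
  have hinvH : H⁻¹ * H = 1 := nonsing_inv_mul H hdet
  have hHinv : H * H⁻¹ = 1 := mul_nonsing_inv H hdet
  set S := krylov g0 H r with hS
  -- g0 ∈ S
  have hg0S : g0 ∈ S := by
    have : g0 ∈ krylov g0 H (r + 1) := by
      apply Submodule.subset_span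
      exact ⟨⟨0, Nat.succ_pos r⟩, by simp⟩
    rw [hr]; exact this
  -- S is H-invariant
  have hHmap : ∀ x ∈ S, H.mulVec x ∈ S := by
    intro x hx
    induction hx using Submodule.span_induction with
    | mem v hv =>
      obtain ⟨i, rfl⟩ := hv
      have : H.mulVec ((H ^ (i : ℕ)).mulVec g0) = (H ^ ((i : ℕ) + 1)).mulVec g0 := by
        rw [mulVec_mulVec, ← pow_succ']
      rw [this, hr]
      apply Submodule.subset_span
      exact ⟨⟨(i : ℕ) + 1, Nat.succ_lt_succ i.2⟩, rfl⟩
    | zero => simp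
    | add a b _ _ ha hb => rw [mulVec_add]; exact S.add_mem ha hb
    | smul t a _ ha => rw [mulVec_smul]; exact S.smul_mem t ha
  -- H.mulVec is injective
  have hinj : Function.Injective H.mulVec := by
    intro a b hab
    have := congrArg H⁻¹.mulVec hab
    simpa [mulVec_mulVec, hinvH] using this
  -- restricted endomorphism on S is surjective
  let e : S →ₗ[ℝ] S := (Matrix.mulVecLin H).restrict (fun x hx => hHmap x hx)
  have heinj : Function.Injective e := by
    intro a b hab
    apply Subtype.ext
    apply hinj
    exact congrArg Subtype.val hab
  have hesurj : Function.Surjective e :=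
    (LinearMap.injective_iff_surjective (f := e)).mp heinj
  obtain ⟨u, hu⟩ := hesurj ⟨g0, hg0S⟩
  have huval : H.mulVec (u : Fin n → ℝ) = g0 := congrArg Subtype.val hu
  -- set xstar
  set xstar : Fin n → ℝ := -(H⁻¹.mulVec c) with hxstar
  have hxc : H.mulVec xstar = -c := by
    rw [hxstar, mulVec_neg, mulVec_mulVec, hHinv, one_mulVec]
  -- u = H⁻¹ g0, so xstar - x0 = -u ∈ S
  have huinv : (u : Fin n → ℝ) = H⁻¹.mulVec g0 := by
    have h2 := congrArg H⁻¹.mulVec huval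
    rw [mulVec_mulVec, hinvH, one_mulVec] at h2
    exact h2
  have hxstarS : xstar - x0 ∈ S := by
    have : xstar - x0 = -(u : Fin n → ℝ) := by
      rw [huinv, hg0, mulVec_add, mulVec_mulVec, hinvH, one_mulVec, hxstar]
      abel
    rw [this]
    exact S.neg_mem u.2
  -- symmetry
  have hT : Hᵀ = H := by
    have := hH.1
    simpa [IsHermitian, conjTranspose_eq_transpose_of_trivial] using this
  have hsymm : ∀ a b : Fin n → ℝ, a ⬝ᵥ H.mulVec b = b ⬝ᵥ H.mulVec a := by
    intro a b
    rw [dotProduct_mulVec, ← mulVec_transpose, hT, dotProduct_comm]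
  -- quadratic expansion
  have expand : ∀ y, f y = f xstar + (1/2) * ((y - xstar) ⬝ᵥ H.mulVec (y - xstar)) := by
    intro y
    set d := y - xstar with hdd
    have hy : y = xstar + d := by rw [hdd]; abel
    rw [hf, hf]
    have e1 : y ⬝ᵥ H.mulVec y
        = xstar ⬝ᵥ H.mulVec xstar + d ⬝ᵥ H.mulVec d - 2 * (c ⬝ᵥ d) := by
      have hcross : d ⬝ᵥ H.mulVec xstar = -(c ⬝ᵥ d) := by
        rw [hxc, dotProduct_neg, dotProduct_comm]
      have hcross2 : xstar ⬝ᵥ H.mulVec d = -(c ⬝ᵥ d) := by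
        rw [hsymm, hcross]
      rw [hy]
      simp only [mulVec_add, dotProduct_add, add_dotProduct, hcross, hcross2]
      ring
    have e2 : c ⬝ᵥ y = c ⬝ᵥ xstar + c ⬝ᵥ d := by
      rw [hy, dotProduct_add]
    rw [e1, e2]; ring
  -- conclude
  by_contra hne
  have hdne : xhat - xstar ≠ 0 := sub_ne_zero.mpr hne
  have hq : 0 < (xhat - xstar) ⬝ᵥ H.mulVec (xhat - xstar) := by
    have := hH.dotProduct_mulVec_pos hdne
    simpa using this
  have hle : f xhat ≤ f xstar := hxhatmin xstar hxstarS
  rw [expand xhat] at hle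
  linarith
end

section
/- Let x̂_k and x̂_{k+1} denote the minimizers of f(x)=(1/2)x^T H x + c^T x over x_0 + K_k(g_0,H) and x_0 + K_{k+1}(g_0,H) respectively, where g_0 = Hx_0 + c. Then the successive differences q̂_k = x̂_{k+1} - x̂_k are mutually conjugate with respect to H: q̂_i^T H q̂_j = 0 for i ≠ j. -/
open Matrix

lemma krylov_mono {n : ℕ} (b : Fin n → ℝ) (A : Matrix (Fin n) (Fin n) ℝ)
    {k l : ℕ} (h : k ≤ l) : krylov b A k ≤ krylov b A l := by
  apply Submodule.span_mono
  rintro _ ⟨i, rfl⟩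
  exact ⟨i.castLE h, rfl⟩

theorem krylov_differences_conjugate {n : ℕ}
    (H : Matrix (Fin n) (Fin n) ℝ) (hH : H.PosDef)
    (c x0 : Fin n → ℝ) (g0 : Fin n → ℝ) (hg0 : g0 = H.mulVec x0 + c)
    (f : (Fin n → ℝ) → ℝ)
    (hf : ∀ x, f x = (1 / 2) * (x ⬝ᵥ H.mulVec x) + c ⬝ᵥ x)
    (xhat : ℕ → (Fin n → ℝ))
    (hmem : ∀ k : ℕ, xhat k - x0 ∈ krylov g0 H k)
    (hmin : ∀ k : ℕ, ∀ y : Fin n → ℝ, y - x0 ∈ krylov g0 H k → f (xhat k) ≤ f y)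
    (qhat : ℕ → (Fin n → ℝ)) (hqhat : ∀ k, qhat k = xhat (k + 1) - xhat k) :
    ∀ i j : ℕ, i ≠ j → qhat i ⬝ᵥ H.mulVec (qhat j) = 0 := by
  -- symmetry of H
  have hs : Hᵀ = H := by
    have := hH.1
    rwa [Matrix.IsHermitian, conjTranspose_eq_transpose_of_trivial] at this
  have hsym : ∀ v w : Fin n → ℝ, v ⬝ᵥ H.mulVec w = w ⬝ᵥ H.mulVec v := by
    intro v w
    rw [dotProduct_mulVec, dotProduct_comm, ← mulVec_transpose, hs]
  -- orthogonality of gradient at xhat k to krylov k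
  have horth : ∀ k : ℕ, ∀ v ∈ krylov g0 H k, (H.mulVec (xhat k) + c) ⬝ᵥ v = 0 := by
    intro k v hv
    set a : ℝ := (H.mulVec (xhat k) + c) ⬝ᵥ v with ha
    set b : ℝ := v ⬝ᵥ H.mulVec v with hb
    have hkey : ∀ t : ℝ, 0 ≤ t * a + t ^ 2 / 2 * b := by
      intro t
      have hmem' : (xhat k + t • v) - x0 ∈ krylov g0 H k := by
        have h : (xhat k + t • v) - x0 = (xhat k - x0) + t • v := by abel
        rw [h]
        exact Submodule.add_mem _ (hmem k) (Submodule.smul_mem _ _ hv)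
      have h1 := hmin k _ hmem'
      rw [hf, hf] at h1
      have hexp : (xhat k + t • v) ⬝ᵥ H.mulVec (xhat k + t • v)
          = xhat k ⬝ᵥ H.mulVec (xhat k) + 2 * t * (v ⬝ᵥ H.mulVec (xhat k)) + t ^ 2 * b := by
        have hxv : xhat k ⬝ᵥ H.mulVec v = v ⬝ᵥ H.mulVec (xhat k) := hsym _ _
        simp only [mulVec_add, dotProduct_add, add_dotProduct, mulVec_smul,
          dotProduct_smul, smul_dotProduct, smul_eq_mul, hb, hxv]
        ring
      have hc : c ⬝ᵥ (xhat k + t • v) = c ⬝ᵥ xhat k + t * (c ⬝ᵥ v) := by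
        simp [dotProduct_add, dotProduct_smul, smul_eq_mul]
      rw [hexp, hc] at h1
      have haeq : a = v ⬝ᵥ H.mulVec (xhat k) + c ⬝ᵥ v := by
        rw [ha, add_dotProduct, dotProduct_comm (H.mulVec (xhat k))]
      rw [haeq]
      nlinarith [h1]
    rcases eq_or_ne v 0 with rfl | hv0
    · simp [ha]
    · have hbpos : 0 < b := hH.dotProduct_mulVec_pos hv0
      have h1 := hkey (-a / b)
      have e : (-a / b) * a + (-a / b) ^ 2 / 2 * b = -(a ^ 2) / (2 * b) := by
        field_simp
        ring
      rw [e] at h1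
      have h2 : 0 ≤ -(a ^ 2) := by
        by_contra h
        push_neg at h
        have : -(a ^ 2) / (2 * b) < 0 := div_neg_of_neg_of_pos h (by linarith)
        linarith
      nlinarith [sq_nonneg a]
  -- the key claim for i < j
  have key : ∀ i j : ℕ, i < j → qhat i ⬝ᵥ H.mulVec (qhat j) = 0 := by
    intro i j hij
    have hqi : qhat i ∈ krylov g0 H j := by
      rw [hqhat i]
      have h1 : xhat (i + 1) - x0 ∈ krylov g0 H j :=
        krylov_mono g0 H (by omega) (hmem (i + 1))
      have h2 : xhat i - x0 ∈ krylov g0 H j :=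
        krylov_mono g0 H (by omega) (hmem i)
      have h : xhat (i + 1) - xhat i = (xhat (i + 1) - x0) - (xhat i - x0) := by abel
      rw [h]
      exact Submodule.sub_mem _ h1 h2
    have hqi' : qhat i ∈ krylov g0 H (j + 1) := krylov_mono g0 H (by omega) hqi
    have e1 := horth (j + 1) (qhat i) hqi'
    have e2 := horth j (qhat i) hqi
    rw [add_dotProduct] at e1 e2
    have e1' : qhat i ⬝ᵥ H.mulVec (xhat (j + 1)) = -(c ⬝ᵥ qhat i) := by
      rw [dotProduct_comm]; linarith
    have e2' : qhat i ⬝ᵥ H.mulVec (xhat j) = -(c ⬝ᵥ qhat i) := by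
      rw [dotProduct_comm]; linarith
    rw [hqhat j, mulVec_sub, dotProduct_sub, e1', e2', sub_self]
  intro i j hij
  rcases lt_or_gt_of_ne hij with h | h
  · exact key i j h
  · rw [hsym]; exact key j i h
end

section
/- Let ĝ_k be the gradient at the k-th Krylov minimizer x̂_k, assume ĝ_k ≠ 0, and let q_{k-1} be a nonzero multiple of q̂_{k-1} = x̂_k - x̂_{k-1}. Define β_k = -(ĝ_k^T ĝ_k · q_{k-1}^T H q_{k-1}) / D and γ_{k-1} = (ĝ_k^T ĝ_k · q_{k-1}^T H ĝ_k) / D, where D = ĝ_k^T H ĝ_k · q_{k-1}^T H q_{k-1} - (ĝ_k^T H q_{k-1})^2. Then β_k ĝ_k + γ_{k-1} q_{k-1} = x̂_{k+1} - x̂_k. -/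
open Matrix

namespace SubspaceNewtonAux

variable {n : ℕ} {H : Matrix (Fin n) (Fin n) ℝ} {g0 : Fin n → ℝ}

lemma krylov_succ (j : ℕ) :
    krylov g0 H (j+1) = krylov g0 H j ⊔ Submodule.span ℝ {(H ^ j).mulVec g0} := by
  unfold krylov
  rw [← Submodule.span_union]
  congr 1
  ext v
  constructor
  · rintro ⟨i, rfl⟩
    rcases Fin.eq_castSucc_or_eq_last i with ⟨i, rfl⟩ | rfl
    · exact Or.inl ⟨i, rfl⟩
    · exact Or.inr rfl
  · rintro (⟨i, rfl⟩ | rfl)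
    · exact ⟨i.castSucc, rfl⟩
    · exact ⟨Fin.last j, rfl⟩

lemma krylov_mono {j l : ℕ} (h : j ≤ l) : krylov g0 H j ≤ krylov g0 H l := by
  apply Submodule.span_mono
  rintro v ⟨i, rfl⟩
  exact ⟨⟨i, lt_of_lt_of_le i.2 h⟩, rfl⟩

lemma mulVec_mem_krylov {j : ℕ} {v : Fin n → ℝ} (hv : v ∈ krylov g0 H j) :
    H.mulVec v ∈ krylov g0 H (j+1) := by
  have : krylov g0 H j ≤ Submodule.comap (Matrix.mulVecLin H) (krylov g0 H (j+1)) := by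
    apply Submodule.span_le.2
    rintro w ⟨i, rfl⟩
    simp only [SetLike.mem_coe, Submodule.mem_comap, Matrix.mulVecLin_apply]
    apply Submodule.subset_span
    refine ⟨⟨i+1, by omega⟩, ?_⟩
    rw [Matrix.mulVec_mulVec, ← pow_succ']
  exact this hv

lemma g0_mem_krylov {j : ℕ} (h : 1 ≤ j) : g0 ∈ krylov g0 H j := by
  apply Submodule.subset_span
  exact ⟨⟨0, h⟩, by simp⟩

lemma dot_H_symm (hH : H.IsHermitian) (x y : Fin n → ℝ) :
    x ⬝ᵥ H.mulVec y = y ⬝ᵥ H.mulVec x := by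
  rw [Matrix.dotProduct_mulVec, ← Matrix.mulVec_transpose, show Hᵀ = H from hH]
  exact dotProduct_comm _ _

lemma posdef_dot (hH : H.PosDef) {x : Fin n → ℝ} (hx : x ≠ 0) :
    0 < x ⬝ᵥ H.mulVec x := by
  have := hH.dotProduct_mulVec_pos hx
  simpa using this

/-- quadratic expansion -/
lemma quad_expand (hH : H.IsHermitian) (x v c : Fin n → ℝ) (t : ℝ) :
    (1/2) * ((x + t • v) ⬝ᵥ H.mulVec (x + t • v)) + c ⬝ᵥ (x + t • v)
      = ((1/2) * (x ⬝ᵥ H.mulVec x) + c ⬝ᵥ x) + t * ((H.mulVec x + c) ⬝ᵥ v)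
        + t^2 / 2 * (v ⬝ᵥ H.mulVec v) := by
  have hsymm : v ⬝ᵥ H.mulVec x = x ⬝ᵥ H.mulVec v := dot_H_symm hH v x
  have hc : (H.mulVec x) ⬝ᵥ v = x ⬝ᵥ H.mulVec v := by
    rw [dotProduct_comm]; exact hsymm
  simp only [Matrix.mulVec_add, Matrix.mulVec_smul, dotProduct_add,
    add_dotProduct, smul_dotProduct, dotProduct_smul,
    smul_eq_mul, add_dotProduct]
  rw [hsymm]
  rw [hc]; ring

/-- gradient orthogonality at the Krylov minimizer -/
lemma grad_orth (hH : H.PosDef) (c x0 : Fin n → ℝ)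
    (f : (Fin n → ℝ) → ℝ)
    (hf : ∀ x, f x = (1 / 2) * (x ⬝ᵥ H.mulVec x) + c ⬝ᵥ x)
    (xhat : ℕ → (Fin n → ℝ))
    (hmem : ∀ j : ℕ, xhat j - x0 ∈ krylov g0 H j)
    (hmin : ∀ j : ℕ, ∀ y : Fin n → ℝ, y - x0 ∈ krylov g0 H j → f (xhat j) ≤ f y)
    (j : ℕ) {v : Fin n → ℝ} (hv : v ∈ krylov g0 H j) :
    (H.mulVec (xhat j) + c) ⬝ᵥ v = 0 := by
  by_cases hv0 : v = 0
  · simp [hv0]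
  set a := (H.mulVec (xhat j) + c) ⬝ᵥ v with ha
  have hb : 0 < v ⬝ᵥ H.mulVec v := posdef_dot hH hv0
  set t : ℝ := -a / (v ⬝ᵥ H.mulVec v) with ht
  have hymem : (xhat j + t • v) - x0 ∈ krylov g0 H j := by
    have : (xhat j + t • v) - x0 = (xhat j - x0) + t • v := by abel
    rw [this]
    exact Submodule.add_mem _ (hmem j) (Submodule.smul_mem _ _ hv)
  have hle := hmin j _ hymem
  rw [hf, hf, quad_expand hH.1] at hle
  have key : 0 ≤ t * a + t^2 / 2 * (v ⬝ᵥ H.mulVec v) := by linarith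
  rw [ht] at key
  have hne : (v ⬝ᵥ H.mulVec v) ≠ 0 := ne_of_gt hb
  have : -a / (v ⬝ᵥ H.mulVec v) * a + (-a / (v ⬝ᵥ H.mulVec v))^2 / 2 * (v ⬝ᵥ H.mulVec v)
      = -(a^2) / (2 * (v ⬝ᵥ H.mulVec v)) := by field_simp; ring
  rw [this] at key
  have h2 : a^2 ≤ 0 := by
    by_contra h
    push_neg at h
    have : -(a^2) / (2 * (v ⬝ᵥ H.mulVec v)) < 0 :=
      div_neg_of_neg_of_pos (by linarith) (by linarith)
    linarith
  have : a = 0 := by nlinarith [sq_nonneg a]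
  exact this

/-- dimension-counting step -/
lemma sup_span_eq {p q' : Submodule ℝ (Fin n → ℝ)} {u w : Fin n → ℝ}
    (hpq : p ≤ q') (hqu : q' ≤ p ⊔ Submodule.span ℝ {u})
    (hwq : w ∈ q') (hwp : w ∉ p) :
    q' = p ⊔ Submodule.span ℝ {w} := by
  have h1 : p ⊔ Submodule.span ℝ {w} ≤ q' :=
    sup_le hpq ((Submodule.span_singleton_le_iff_mem _ _).2 hwq)
  have hlt : p < p ⊔ Submodule.span ℝ {w} := by
    refine lt_of_le_of_ne le_sup_left ?_
    intro h
    exact hwp (h ▸ (le_sup_right : Submodule.span ℝ {w} ≤ p ⊔ Submodule.span ℝ {w})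
      (Submodule.mem_span_singleton_self w))
  have hr1 : Module.finrank ℝ p < Module.finrank ℝ (p ⊔ Submodule.span ℝ {w} : Submodule ℝ _) :=
    Submodule.finrank_lt_finrank_of_lt hlt
  have hr2 : Module.finrank ℝ q' ≤ Module.finrank ℝ p + 1 := by
    refine le_trans (Submodule.finrank_mono hqu) ?_
    refine le_trans (Submodule.finrank_add_le_finrank_add_finrank _ _) ?_
    gcongr
    by_cases hu : u = 0
    · rw [hu, Submodule.span_zero_singleton]
      simp
    · exact le_of_eq (finrank_span_singleton hu)
  exact (Submodule.eq_of_le_of_finrank_le h1 (by omega)).symm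

end SubspaceNewtonAux

namespace SubspaceNewtonAux

lemma alg_facts (gg a b d D β γ : ℝ) (hD : D = a * d - b ^ 2) (hDne : D ≠ 0)
    (hβ : β = -(gg * d) / D) (hγ : γ = gg * b / D) :
    β * b + γ * d = 0 ∧ gg + β * a + γ * b = 0 := by
  subst hβ hγ
  constructor
  · field_simp
    ring
  · field_simp
    rw [hD]; ring

lemma Dpos (a b d : ℝ) (hd : 0 < d)
    (hw : 0 < a + 2 * (-b / d) * b + (-b / d) ^ 2 * d) : 0 < a * d - b ^ 2 := by
  have e : (a + 2 * (-b / d) * b + (-b / d) ^ 2 * d) * d = a * d - b ^ 2 := by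
    field_simp; ring
  have := mul_pos hw hd
  rwa [e] at this

end SubspaceNewtonAux

open SubspaceNewtonAux in
theorem subspace_newton_step_extension {n : ℕ}
    (H : Matrix (Fin n) (Fin n) ℝ) (hH : H.PosDef)
    (c x0 : Fin n → ℝ) (g0 : Fin n → ℝ) (hg0 : g0 = H.mulVec x0 + c)
    (f : (Fin n → ℝ) → ℝ)
    (hf : ∀ x, f x = (1 / 2) * (x ⬝ᵥ H.mulVec x) + c ⬝ᵥ x)
    (xhat : ℕ → (Fin n → ℝ))
    (hmem : ∀ j : ℕ, xhat j - x0 ∈ krylov g0 H j)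
    (hmin : ∀ j : ℕ, ∀ y : Fin n → ℝ, y - x0 ∈ krylov g0 H j → f (xhat j) ≤ f y)
    (k : ℕ) (hk : 1 ≤ k)
    (ghat : Fin n → ℝ) (hghat : ghat = H.mulVec (xhat k) + c) (hgne : ghat ≠ 0)
    (q : Fin n → ℝ) (lam : ℝ) (hlam : lam ≠ 0)
    (hq : q = lam • (xhat k - xhat (k - 1)))
    (D β γ : ℝ)
    (hD : D = (ghat ⬝ᵥ H.mulVec ghat) * (q ⬝ᵥ H.mulVec q) - (ghat ⬝ᵥ H.mulVec q) ^ 2)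
    (hβ : β = -((ghat ⬝ᵥ ghat) * (q ⬝ᵥ H.mulVec q)) / D)
    (hγ : γ = ((ghat ⬝ᵥ ghat) * (q ⬝ᵥ H.mulVec ghat)) / D) :
    β • ghat + γ • q = xhat (k + 1) - xhat k := by
  classical
  have hk1 : k - 1 + 1 = k := Nat.succ_pred_eq_of_pos hk
  have orth : ∀ j : ℕ, ∀ v ∈ krylov g0 H j, (H.mulVec (xhat j) + c) ⬝ᵥ v = 0 :=
    fun j v hv => grad_orth hH c x0 f hf xhat hmem hmin j hv
  set qhat : Fin n → ℝ := xhat k - xhat (k - 1) with hqhatdef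
  have hqhatK : qhat ∈ krylov g0 H k := by
    have h2 := krylov_mono (g0 := g0) (H := H) (Nat.sub_le k 1) (hmem (k - 1))
    have e : qhat = (xhat k - x0) - (xhat (k - 1) - x0) := by rw [hqhatdef]; abel
    rw [e]; exact Submodule.sub_mem _ (hmem k) h2
  have hqK : q ∈ krylov g0 H k := hq ▸ Submodule.smul_mem _ _ hqhatK
  have hghat_eq : ghat = H.mulVec (xhat k - x0) + g0 := by
    rw [hghat, hg0, Matrix.mulVec_sub]; abel
  have hgK1 : ghat ∈ krylov g0 H (k + 1) := by
    rw [hghat_eq]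
    exact Submodule.add_mem _ (mulVec_mem_krylov (hmem k)) (g0_mem_krylov (by omega))
  have horthk : ∀ v ∈ krylov g0 H k, ghat ⬝ᵥ v = 0 := fun v hv => by
    rw [hghat]; exact orth k v hv
  have hgnotK : ghat ∉ krylov g0 H k := fun h =>
    hgne (dotProduct_self_eq_zero.mp (horthk ghat h))
  set gkm : Fin n → ℝ := H.mulVec (xhat (k - 1)) + c with hgkmdef
  have horthkm : ∀ v ∈ krylov g0 H (k - 1), gkm ⬝ᵥ v = 0 := fun v hv => orth (k - 1) v hv
  have hgkmK : gkm ∈ krylov g0 H k := by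
    have e : gkm = H.mulVec (xhat (k - 1) - x0) + g0 := by
      rw [hgkmdef, hg0, Matrix.mulVec_sub]; abel
    rw [e]
    have h1 := mulVec_mem_krylov (g0 := g0) (hmem (k - 1))
    rw [hk1] at h1
    exact Submodule.add_mem _ h1 (g0_mem_krylov hk)
  have hHqhat : H.mulVec qhat = ghat - gkm := by
    rw [hghat, hgkmdef, hqhatdef, Matrix.mulVec_sub]; abel
  have hqhat0 : qhat ≠ 0 := by
    intro h
    apply hgnotK
    have hx : xhat k = xhat (k - 1) := by
      have := sub_eq_zero.mp h; exact this
    rw [hghat, hx]; exact hgkmK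
  have hq0 : q ≠ 0 := by rw [hq]; exact smul_ne_zero hlam hqhat0
  have hqhatnot : qhat ∉ krylov g0 H (k - 1) := by
    intro hmemq
    have h1 : qhat ⬝ᵥ H.mulVec qhat = 0 := by
      rw [hHqhat, dotProduct_sub]
      have e1 : qhat ⬝ᵥ ghat = 0 := by
        rw [dotProduct_comm]; exact horthk qhat hqhatK
      have e2 : qhat ⬝ᵥ gkm = 0 := by
        rw [dotProduct_comm]; exact horthkm qhat hmemq
      rw [e1, e2]; ring
    exact absurd h1 (ne_of_gt (posdef_dot hH hqhat0))
  have hKk : krylov g0 H k = krylov g0 H (k - 1) ⊔ Submodule.span ℝ {qhat} := by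
    refine sup_span_eq (u := (H ^ (k - 1)).mulVec g0) (krylov_mono (Nat.sub_le k 1)) ?_ hqhatK hqhatnot
    have h := krylov_succ (g0 := g0) (H := H) (k - 1)
    rw [hk1] at h
    exact h.le
  have hspanq : Submodule.span ℝ {qhat} = Submodule.span ℝ ({q} : Set (Fin n → ℝ)) := by
    rw [hq]
    exact (Submodule.span_singleton_smul_eq (isUnit_iff_ne_zero.2 hlam) _).symm
  have hKk1 : krylov g0 H (k + 1) = krylov g0 H k ⊔ Submodule.span ℝ {ghat} :=
    sup_span_eq (krylov_mono (Nat.le_succ k)) (krylov_succ k).le hgK1 hgnotK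
  have hbsym : q ⬝ᵥ H.mulVec ghat = ghat ⬝ᵥ H.mulVec q := dot_H_symm hH.1 q ghat
  have hd : 0 < q ⬝ᵥ H.mulVec q := posdef_dot hH hq0
  -- D > 0
  have hDpos : 0 < D := by
    set b : ℝ := ghat ⬝ᵥ H.mulVec q with hbdef
    set d : ℝ := q ⬝ᵥ H.mulVec q with hddef
    have hw0 : ghat + (-b / d) • q ≠ 0 := by
      intro h
      apply hgnotK
      have e : ghat = -((-b / d) • q) := eq_neg_of_add_eq_zero_left h
      rw [e]
      exact Submodule.neg_mem _ (Submodule.smul_mem _ _ hqK)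
    have hwpos := posdef_dot hH hw0
    have hexp : (ghat + (-b / d) • q) ⬝ᵥ H.mulVec (ghat + (-b / d) • q)
        = ghat ⬝ᵥ H.mulVec ghat + 2 * (-b / d) * b + (-b / d) ^ 2 * d := by
      simp only [Matrix.mulVec_add, Matrix.mulVec_smul, dotProduct_add,
        add_dotProduct, smul_dotProduct, dotProduct_smul, smul_eq_mul]
      rw [hbsym]
      rw [← hbdef, ← hddef]
      ring
    rw [hexp] at hwpos
    rw [hD]
    exact Dpos _ _ _ hd hwpos
  have hDne : D ≠ 0 := ne_of_gt hDpos
  rw [hbsym] at hγ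
  obtain ⟨c2alg, c3alg⟩ := alg_facts (ghat ⬝ᵥ ghat) (ghat ⬝ᵥ H.mulVec ghat)
    (ghat ⬝ᵥ H.mulVec q) (q ⬝ᵥ H.mulVec q) D β γ hD hDne hβ hγ
  set w : Fin n → ℝ := ghat + β • H.mulVec ghat + γ • H.mulVec q with hwdef
  have hworth : ∀ v ∈ krylov g0 H (k + 1), w ⬝ᵥ v = 0 := by
    intro v hv
    rw [hKk1, hKk, hspanq] at hv
    rcases Submodule.mem_sup.1 hv with ⟨v1, hv1, v2, hv2, rfl⟩
    rcases Submodule.mem_sup.1 hv1 with ⟨v3, hv3, v4, hv4, rfl⟩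
    rcases Submodule.mem_span_singleton.1 hv4 with ⟨r, rfl⟩
    rcases Submodule.mem_span_singleton.1 hv2 with ⟨s, rfl⟩
    have c1 : w ⬝ᵥ v3 = 0 := by
      have e1 : ghat ⬝ᵥ v3 = 0 := horthk v3 (krylov_mono (Nat.sub_le k 1) hv3)
      have e2 : (H.mulVec ghat) ⬝ᵥ v3 = 0 := by
        rw [dotProduct_comm, dot_H_symm hH.1 v3 ghat]
        have h1 := mulVec_mem_krylov (g0 := g0) hv3
        rw [hk1] at h1
        exact horthk _ h1
      have e3 : (H.mulVec q) ⬝ᵥ v3 = 0 := by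
        have hq' : H.mulVec q = lam • (ghat - gkm) := by
          rw [hq, Matrix.mulVec_smul, hHqhat]
        rw [hq', smul_dotProduct, sub_dotProduct]
        rw [show ghat ⬝ᵥ v3 = 0 from e1]
        rw [show gkm ⬝ᵥ v3 = 0 from horthkm v3 hv3]
        simp
      rw [hwdef]
      simp only [add_dotProduct, smul_dotProduct, smul_eq_mul]
      rw [e1, e2, e3]; ring
    have c2 : w ⬝ᵥ q = 0 := by
      rw [hwdef]
      simp only [add_dotProduct, smul_dotProduct, smul_eq_mul]
      rw [show ghat ⬝ᵥ q = 0 from horthk q hqK]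
      rw [show (H.mulVec ghat) ⬝ᵥ q = ghat ⬝ᵥ H.mulVec q from by
        rw [dotProduct_comm, hbsym]]
      rw [show (H.mulVec q) ⬝ᵥ q = q ⬝ᵥ H.mulVec q from dotProduct_comm _ _]
      linarith [c2alg]
    have c3 : w ⬝ᵥ ghat = 0 := by
      rw [hwdef]
      simp only [add_dotProduct, smul_dotProduct, smul_eq_mul]
      rw [show (H.mulVec ghat) ⬝ᵥ ghat = ghat ⬝ᵥ H.mulVec ghat from dotProduct_comm _ _]
      rw [show (H.mulVec q) ⬝ᵥ ghat = ghat ⬝ᵥ H.mulVec q from by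
        rw [dotProduct_comm, dot_H_symm hH.1 ghat q]]
      linarith [c3alg]
    simp only [dotProduct_add, dotProduct_smul, smul_eq_mul, c1, c2, c3]
    ring
  set y : Fin n → ℝ := xhat k + (β • ghat + γ • q) with hydef
  set z : Fin n → ℝ := y - xhat (k + 1) with hzdef
  have hzK : z ∈ krylov g0 H (k + 1) := by
    have e : z = ((xhat k - x0) + (β • ghat + γ • q)) - (xhat (k + 1) - x0) := by
      rw [hzdef, hydef]; abel
    rw [e]
    refine Submodule.sub_mem _ (Submodule.add_mem _
      (krylov_mono (Nat.le_succ k) (hmem k))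
      (Submodule.add_mem _ (Submodule.smul_mem _ _ hgK1)
        (Submodule.smul_mem _ _ (krylov_mono (Nat.le_succ k) hqK)))) (hmem (k + 1))
  have hHz : H.mulVec z = w - (H.mulVec (xhat (k + 1)) + c) := by
    rw [hzdef, hydef, hwdef, hghat, Matrix.mulVec_sub, Matrix.mulVec_add,
      Matrix.mulVec_add, Matrix.mulVec_smul, Matrix.mulVec_smul]
    abel
  have hz0 : z = 0 := by
    by_contra h
    have h1 : (H.mulVec z) ⬝ᵥ z = 0 := by
      rw [hHz, sub_dotProduct, hworth z hzK, orth (k + 1) z hzK]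
      ring
    have h2 : z ⬝ᵥ H.mulVec z = 0 := by
      rw [dotProduct_comm]; exact h1
    exact absurd h2 (ne_of_gt (posdef_dot hH h))
  have hy : y = xhat (k + 1) := sub_eq_zero.mp hz0
  rw [← hy, hydef]
  abel
end

section
/- With the notation above, the vector q_k = -ĝ_k + ((ĝ_k^T H q_{k-1})/(q_{k-1}^T H q_{k-1})) q_{k-1} is conjugate with respect to H to each of q_0, ..., q_{k-1} and is a nonzero multiple of q̂_k = x̂_{k+1} - x̂_k. -/
open Matrix

namespace CGaux

variable {n : ℕ} {H : Matrix (Fin n) (Fin n) ℝ} {g0 : Fin n → ℝ}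

lemma krylov_mono {j j' : ℕ} (h : j ≤ j') : krylov g0 H j ≤ krylov g0 H j' := by
  refine Submodule.span_le.2 ?_
  rintro x ⟨i, rfl⟩
  exact Submodule.subset_span ⟨⟨(i : ℕ), lt_of_lt_of_le i.2 h⟩, rfl⟩

lemma pow_mem {i j : ℕ} (hij : i < j) : (H ^ i) *ᵥ g0 ∈ krylov g0 H j :=
  Submodule.subset_span ⟨⟨i, hij⟩, rfl⟩

lemma g0_mem {j : ℕ} (hj : 0 < j) : g0 ∈ krylov g0 H j := by
  have := pow_mem (H := H) (g0 := g0) hj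
  simpa using this

lemma mulVec_mem {j : ℕ} {x : Fin n → ℝ} (hx : x ∈ krylov g0 H j) :
    H *ᵥ x ∈ krylov g0 H (j + 1) := by
  have hmap : Submodule.map (Matrix.mulVecLin H) (krylov g0 H j) ≤ krylov g0 H (j + 1) := by
    rw [krylov, Submodule.map_span, Submodule.span_le]
    rintro y ⟨x', ⟨i, rfl⟩, rfl⟩
    simp only [Matrix.mulVecLin_apply, Matrix.mulVec_mulVec, ← pow_succ']
    exact pow_mem (Nat.succ_lt_succ i.2)
  exact hmap ⟨x, hx, rfl⟩

lemma krylov_succ_le (j : ℕ) :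
    krylov g0 H (j + 1) ≤ krylov g0 H j ⊔ (Submodule.span ℝ {(H ^ j) *ᵥ g0}) := by
  refine Submodule.span_le.2 ?_
  rintro x ⟨i, rfl⟩
  show H ^ (i : ℕ) *ᵥ g0 ∈ _
  rcases lt_or_eq_of_le (Nat.lt_succ_iff.1 i.2) with hi | hi
  · exact Submodule.mem_sup_left (pow_mem hi)
  · rw [hi]
    exact Submodule.mem_sup_right (Submodule.mem_span_singleton_self _)

lemma krylov_finrank_le (j : ℕ) : Module.finrank ℝ (krylov g0 H j) ≤ j := by
  induction j with
  | zero =>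
    have : krylov g0 H 0 = ⊥ := by
      rw [krylov]
      simp [Submodule.span_eq_bot]
    simp [this]
  | succ j ih =>
    have h1 := Submodule.finrank_mono (krylov_succ_le (g0 := g0) (H := H) j)
    have h2 := Submodule.finrank_sup_add_finrank_inf_eq (krylov g0 H j)
      (Submodule.span ℝ {(H ^ j) *ᵥ g0})
    have h3 : Module.finrank ℝ (Submodule.span ℝ {(H ^ j) *ᵥ g0}) ≤ 1 := by
      rcases eq_or_ne ((H ^ j) *ᵥ g0) 0 with h | h
      · rw [h, Submodule.span_zero_singleton, finrank_bot]
        omega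
      · rw [finrank_span_singleton h]
    omega

lemma sum_dotProduct' {m : ℕ} (g : Fin m → ℝ) (d : Fin m → (Fin n → ℝ)) (w : Fin n → ℝ) :
    (∑ i, g i • d i) ⬝ᵥ w = ∑ i, g i * (d i ⬝ᵥ w) := by
  simp only [dotProduct, Finset.sum_apply, Pi.smul_apply, smul_eq_mul,
    Finset.sum_mul, Finset.mul_sum]
  rw [Finset.sum_comm]
  simp [mul_assoc]

end CGaux

theorem next_conjugate_direction {n : ℕ}
    (H : Matrix (Fin n) (Fin n) ℝ) (hH : H.PosDef)
    (c x0 : Fin n → ℝ) (g0 : Fin n → ℝ) (hg0 : g0 = H.mulVec x0 + c)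
    (f : (Fin n → ℝ) → ℝ)
    (hf : ∀ x, f x = (1 / 2) * (x ⬝ᵥ H.mulVec x) + c ⬝ᵥ x)
    (xhat : ℕ → (Fin n → ℝ))
    (hmem : ∀ j : ℕ, xhat j - x0 ∈ krylov g0 H j)
    (hmin : ∀ j : ℕ, ∀ y : Fin n → ℝ, y - x0 ∈ krylov g0 H j → f (xhat j) ≤ f y)
    (k : ℕ) (hk : 1 ≤ k)
    (ghat : Fin n → ℝ) (hghat : ghat = H.mulVec (xhat k) + c) (hgne : ghat ≠ 0)
    (q : Fin k → (Fin n → ℝ)) (lam : Fin k → ℝ) (hlam : ∀ i, lam i ≠ 0)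
    (hq : ∀ i : Fin k, q i = lam i • (xhat ((i : ℕ) + 1) - xhat (i : ℕ)))
    (qlast : Fin n → ℝ)
    (hqlast : qlast = q ⟨k - 1, by omega⟩)
    (qk : Fin n → ℝ)
    (hqk : qk = -ghat + ((ghat ⬝ᵥ H.mulVec qlast) / (qlast ⬝ᵥ H.mulVec qlast)) • qlast) :
    (∀ i : Fin k, qk ⬝ᵥ H.mulVec (q i) = 0) ∧
      ∃ μ : ℝ, μ ≠ 0 ∧ qk = μ • (xhat (k + 1) - xhat k) := by
  -- symmetry of H
  have hs : Hᵀ = H := by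
    have h := hH.isHermitian
    ext i j
    have := congrFun (congrFun h i) j
    simpa using this
  have sym : ∀ u v : Fin n → ℝ, u ⬝ᵥ H *ᵥ v = v ⬝ᵥ H *ᵥ u := by
    intro u v
    rw [show H *ᵥ v = v ᵥ* H from by conv_lhs => rw [← hs, Matrix.mulVec_transpose],
      dotProduct_comm, ← Matrix.dotProduct_mulVec]
  -- positivity facts
  have hpos : ∀ v : Fin n → ℝ, v ≠ 0 → 0 < v ⬝ᵥ H *ᵥ v := by
    intro v hv
    have := hH.dotProduct_mulVec_pos hv
    simpa using this
  have hnn : ∀ v : Fin n → ℝ, 0 ≤ v ⬝ᵥ H *ᵥ v := by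
    intro v
    rcases eq_or_ne v 0 with h | h
    · simp [h]
    · exact (hpos v h).le
  have hzero : ∀ v : Fin n → ℝ, v ⬝ᵥ H *ᵥ v = 0 → v = 0 := by
    intro v hv
    by_contra h
    exact absurd hv (ne_of_gt (hpos v h))
  -- quadratic expansion
  have hquad : ∀ x v : Fin n → ℝ,
      f (x + v) = f x + (H *ᵥ x + c) ⬝ᵥ v + (1 / 2) * (v ⬝ᵥ H *ᵥ v) := by
    intro x v
    have h1 := sym x v
    simp only [hf, Matrix.mulVec_add, dotProduct_add, add_dotProduct]
    rw [dotProduct_comm (H *ᵥ x) v] at *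
    linarith [h1]
  -- gradient orthogonal to Krylov space
  have horth : ∀ j : ℕ, ∀ v ∈ krylov g0 H j, (H *ᵥ xhat j + c) ⬝ᵥ v = 0 := by
    intro j v hv
    by_contra hne
    set gv := (H *ᵥ xhat j + c) ⬝ᵥ v with hgv
    set a := v ⬝ᵥ H *ᵥ v with ha
    have ha0 : 0 ≤ a := hnn v
    have key : ∀ t : ℝ, 0 ≤ t * gv + 1 / 2 * (t ^ 2 * a) := by
      intro t
      have hmem' : (xhat j + t • v) - x0 ∈ krylov g0 H j := by
        rw [add_sub_right_comm]
        exact add_mem (hmem j) (Submodule.smul_mem _ _ hv)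
      have h1 := hmin j (xhat j + t • v) hmem'
      have h2 := hquad (xhat j) (t • v)
      rw [dotProduct_smul, Matrix.mulVec_smul, dotProduct_smul,
        smul_dotProduct] at h2
      simp only [smul_eq_mul, ← hgv, ← ha] at h2
      nlinarith [h1, h2]
    have h1 := key (-gv / (a + 1))
    have ha1 : (0:ℝ) < a + 1 := by linarith
    have hgv2 : 0 < gv ^ 2 := by positivity
    have hrw : (-gv / (a + 1)) * gv + 1 / 2 * ((-gv / (a + 1)) ^ 2 * a)
        = -(gv ^ 2) * (a + 2) / (2 * (a + 1) ^ 2) := by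
      field_simp
      ring
    rw [hrw] at h1
    have : -(gv ^ 2) * (a + 2) / (2 * (a + 1) ^ 2) < 0 := by
      apply div_neg_of_neg_of_pos
      · nlinarith
      · positivity
    linarith
  -- gradient in next Krylov space
  have gmem : ∀ j : ℕ, H *ᵥ xhat j + c ∈ krylov g0 H (j + 1) := by
    intro j
    have h1 : H *ᵥ (xhat j - x0) ∈ krylov g0 H (j + 1) := CGaux.mulVec_mem (hmem j)
    have h2 : H *ᵥ xhat j + c = g0 + H *ᵥ (xhat j - x0) := by
      rw [hg0, Matrix.mulVec_sub]
      abel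
    rw [h2]
    exact add_mem (CGaux.g0_mem (Nat.succ_pos j)) h1
  -- direction in Krylov space
  have dmem : ∀ j : ℕ, xhat (j + 1) - xhat j ∈ krylov g0 H (j + 1) := by
    intro j
    have h : xhat (j + 1) - xhat j = (xhat (j + 1) - x0) - (xhat j - x0) := by abel
    rw [h]
    exact sub_mem (hmem (j + 1)) (CGaux.krylov_mono (Nat.le_succ j) (hmem j))
  have hHd : ∀ j : ℕ, H *ᵥ (xhat (j + 1) - xhat j)
      = (H *ᵥ xhat (j + 1) + c) - (H *ᵥ xhat j + c) := by
    intro j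
    rw [Matrix.mulVec_sub]
    abel
  -- gradients nonzero up to k
  have gnz : ∀ i : ℕ, i ≤ k → H *ᵥ xhat i + c ≠ 0 := by
    intro i hik hz
    have glob : ∀ y : Fin n → ℝ, f (xhat i) ≤ f y := by
      intro y
      have h := hquad (xhat i) (y - xhat i)
      rw [hz, add_sub_cancel] at h
      have := hnn (y - xhat i)
      simp only [zero_dotProduct] at h
      nlinarith
    have h1 : f (xhat k) ≤ f (xhat i) := hmin k _ (CGaux.krylov_mono hik (hmem i))
    have h2 : f (xhat i) ≤ f (xhat k) := glob _
    have h := hquad (xhat i) (xhat k - xhat i)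
    rw [hz, add_sub_cancel] at h
    simp only [zero_dotProduct] at h
    have hq0 : (xhat k - xhat i) ⬝ᵥ H *ᵥ (xhat k - xhat i) = 0 := by linarith
    have hxx : xhat k = xhat i := by
      have := hzero _ hq0
      exact sub_eq_zero.1 this
    apply hgne
    rw [hghat, hxx, hz]
  -- directions nonzero up to k
  have dnz : ∀ i : ℕ, i ≤ k → xhat (i + 1) - xhat i ≠ 0 := by
    intro i hik hd
    have hx : xhat (i + 1) = xhat i := sub_eq_zero.1 hd
    have hgi : H *ᵥ xhat i + c ∈ krylov g0 H (i + 1) := gmem i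
    have := horth (i + 1) _ hgi
    rw [hx] at this
    exact gnz i hik (dotProduct_self_eq_zero.1 this)
  -- conjugacy of successive directions
  have conj : ∀ i j : ℕ, i < j →
      (xhat (i + 1) - xhat i) ⬝ᵥ H *ᵥ (xhat (j + 1) - xhat j) = 0 := by
    intro i j hij
    rw [hHd j, dotProduct_sub]
    have hdi : xhat (i + 1) - xhat i ∈ krylov g0 H (i + 1) := dmem i
    have h1 : (H *ᵥ xhat (j + 1) + c) ⬝ᵥ (xhat (i + 1) - xhat i) = 0 :=
      horth (j + 1) _ (CGaux.krylov_mono (by omega) hdi)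
    have h2 : (H *ᵥ xhat j + c) ⬝ᵥ (xhat (i + 1) - xhat i) = 0 :=
      horth j _ (CGaux.krylov_mono (by omega) hdi)
    rw [dotProduct_comm] at h1 h2
    rw [h1, h2]
    ring
  -- qlast facts
  have hk1 : k - 1 + 1 = k := by omega
  set lml := lam ⟨k - 1, by omega⟩ with hlml
  have hql : qlast = lml • (xhat k - xhat (k - 1)) := by
    rw [hqlast, hq]
    simp only [← hlml]
    congr 2
    rw [hk1]
  have hdk1 : xhat k - xhat (k - 1) ≠ 0 := by
    have := dnz (k - 1) (by omega)
    rwa [hk1] at this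
  have hqlne : qlast ≠ 0 := by
    rw [hql]
    exact smul_ne_zero (hlam _) hdk1
  have hden : 0 < qlast ⬝ᵥ H *ᵥ qlast := hpos _ hqlne
  have hqlmem : qlast ∈ krylov g0 H k := by
    rw [hql]
    refine Submodule.smul_mem _ _ ?_
    have := dmem (k - 1)
    rwa [hk1] at this
  -- key conjugacy computation
  have key1 : ∀ m : ℕ, m < k → qk ⬝ᵥ H *ᵥ (xhat (m + 1) - xhat m) = 0 := by
    intro m hm
    rcases eq_or_lt_of_le (Nat.lt_succ_iff.1 (by omega : m < (k - 1) + 1)) with hmk | hmk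
    · -- m = k - 1
      have hdlast : H *ᵥ qlast = lml • (H *ᵥ (xhat (m + 1) - xhat m)) := by
        rw [hql, Matrix.mulVec_smul, hmk, hk1]
      have hcalc : qk ⬝ᵥ H *ᵥ qlast = 0 := by
        rw [hqk, add_dotProduct, neg_dotProduct, smul_dotProduct,
          smul_eq_mul, div_mul_cancel₀]
        · ring
        · exact ne_of_gt hden
      rw [hdlast, dotProduct_smul, smul_eq_mul] at hcalc
      rcases mul_eq_zero.1 hcalc with h | h
      · exact absurd h (hlam _)
      · exact h
    · -- m < k - 1
      have hgi : ghat ⬝ᵥ (H *ᵥ (xhat (m + 1) - xhat m)) = 0 := by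
        rw [hghat, hHd m, dotProduct_sub]
        have h1 := horth k _ (CGaux.krylov_mono (by omega : m + 1 + 1 ≤ k) (gmem (m + 1)))
        have h2 := horth k _ (CGaux.krylov_mono (by omega : m + 1 ≤ k) (gmem m))
        rw [h1, h2]
        ring
      have hcl : qlast ⬝ᵥ H *ᵥ (xhat (m + 1) - xhat m) = 0 := by
        rw [hql, smul_dotProduct, smul_eq_mul]
        have := conj m (k - 1) (by omega)
        rw [hk1] at this
        rw [sym] at this
        rw [this, mul_zero]
      rw [hqk, add_dotProduct, neg_dotProduct, smul_dotProduct,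
        smul_eq_mul, hgi, hcl]
      ring
  have part1 : ∀ i : Fin k, qk ⬝ᵥ H *ᵥ q i = 0 := by
    intro i
    rw [hq i, Matrix.mulVec_smul, dotProduct_smul, smul_eq_mul,
      key1 (i : ℕ) i.2, mul_zero]
  refine ⟨part1, ?_⟩
  -- Part 2
  -- ghat not in K k, ghat orth to K k
  have hgorth : ∀ v ∈ krylov g0 H k, ghat ⬝ᵥ v = 0 := by
    intro v hv
    rw [hghat]
    exact horth k v hv
  have hgnotin : ghat ∉ krylov g0 H k := by
    intro h
    exact hgne (dotProduct_self_eq_zero.1 (hgorth ghat h))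
  have hgmem : ghat ∈ krylov g0 H (k + 1) := by
    rw [hghat]; exact gmem k
  -- K (k+1) = K k ⊔ span ghat
  have hKsplit : krylov g0 H (k + 1) = krylov g0 H k ⊔ Submodule.span ℝ {ghat} := by
    refine (Submodule.eq_of_le_of_finrank_le ?_ ?_).symm
    · exact sup_le (CGaux.krylov_mono (Nat.le_succ k))
        ((Submodule.span_singleton_le_iff_mem _ _).2 hgmem)
    · have hinf : krylov g0 H k ⊓ Submodule.span ℝ {ghat} = ⊥ := by
        rw [eq_bot_iff]
        rintro x ⟨hx1, hx2⟩
        rcases Submodule.mem_span_singleton.1 hx2 with ⟨b, rfl⟩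
        rcases eq_or_ne b 0 with hb | hb
        · simp [hb]
        · exact absurd (Submodule.smul_mem _ b⁻¹ hx1)
            (by rwa [inv_smul_smul₀ hb])
      have h2 := Submodule.finrank_sup_add_finrank_inf_eq (krylov g0 H k)
        (Submodule.span ℝ {ghat})
      rw [hinf, finrank_bot, finrank_span_singleton hgne] at h2
      have h3 := Submodule.finrank_mono (CGaux.krylov_succ_le (g0 := g0) (H := H) k)
      have h4 := Submodule.finrank_sup_add_finrank_inf_eq (krylov g0 H k)
        (Submodule.span ℝ {(H ^ k) *ᵥ g0})
      have h5 : Module.finrank ℝ (Submodule.span ℝ {(H ^ k) *ᵥ g0}) ≤ 1 := by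
        rcases eq_or_ne ((H ^ k) *ᵥ g0) 0 with h | h
        · rw [h, Submodule.span_zero_singleton, finrank_bot]
          omega
        · rw [finrank_span_singleton h]
      omega
  -- directions span K k
  have hdspan : Submodule.span ℝ
      (Set.range fun i : Fin k => xhat ((i : ℕ) + 1) - xhat (i : ℕ)) = krylov g0 H k := by
    have hle : Submodule.span ℝ
        (Set.range fun i : Fin k => xhat ((i : ℕ) + 1) - xhat (i : ℕ)) ≤ krylov g0 H k := by
      refine Submodule.span_le.2 ?_
      rintro x ⟨i, rfl⟩
      exact CGaux.krylov_mono i.2 (dmem (i : ℕ))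
    refine Submodule.eq_of_le_of_finrank_le hle ?_
    have hli : LinearIndependent ℝ (fun i : Fin k => xhat ((i : ℕ) + 1) - xhat (i : ℕ)) := by
      rw [Fintype.linearIndependent_iff]
      intro g hg j
      have hdot : ∑ i : Fin k, g i * ((xhat ((i : ℕ) + 1) - xhat (i : ℕ)) ⬝ᵥ H *ᵥ
          (xhat ((j : ℕ) + 1) - xhat (j : ℕ))) = 0 := by
        rw [← CGaux.sum_dotProduct', hg, zero_dotProduct]
      rw [Finset.sum_eq_single j] at hdot
      · have hdj : 0 < (xhat ((j : ℕ) + 1) - xhat (j : ℕ)) ⬝ᵥ H *ᵥ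
            (xhat ((j : ℕ) + 1) - xhat (j : ℕ)) := hpos _ (dnz _ (by omega))
        rcases mul_eq_zero.1 hdot with h | h
        · exact h
        · exact absurd h (ne_of_gt hdj)
      · intro i _ hij
        rcases lt_or_gt_of_ne (fun h => hij (Fin.ext h) : (i : ℕ) ≠ (j : ℕ)) with h | h
        · rw [conj _ _ h, mul_zero]
        · rw [sym, conj _ _ h, mul_zero]
      · intro h
        exact absurd (Finset.mem_univ j) h
    have h1 : Module.finrank ℝ (Submodule.span ℝ
        (Set.range fun i : Fin k => xhat ((i : ℕ) + 1) - xhat (i : ℕ))) = k := by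
      rw [finrank_span_eq_card hli, Fintype.card_fin]
    rw [h1]
    exact CGaux.krylov_finrank_le k
  -- decompose qk and d k
  have hqkmem : qk ∈ krylov g0 H (k + 1) := by
    rw [hqk]
    exact add_mem (neg_mem hgmem)
      (Submodule.smul_mem _ _ (CGaux.krylov_mono (Nat.le_succ k) hqlmem))
  have hdkmem : xhat (k + 1) - xhat k ∈ krylov g0 H (k + 1) := dmem k
  rw [hKsplit] at hqkmem hdkmem
  rcases Submodule.mem_sup.1 hqkmem with ⟨y, hy, z1, hz1, hqky⟩
  rcases Submodule.mem_span_singleton.1 hz1 with ⟨a, rfl⟩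
  rcases Submodule.mem_sup.1 hdkmem with ⟨w, hw, z2, hz2, hdkw⟩
  rcases Submodule.mem_span_singleton.1 hz2 with ⟨b, rfl⟩
  set G := ghat ⬝ᵥ ghat with hG
  have hGne : G ≠ 0 := fun h => hgne (dotProduct_self_eq_zero.1 h)
  -- a = -1
  have hga : ghat ⬝ᵥ qk = a * G := by
    rw [← hqky, dotProduct_add, dotProduct_smul, hgorth y hy, smul_eq_mul]
    ring
  have hga' : ghat ⬝ᵥ qk = -G := by
    rw [hqk, dotProduct_add, dotProduct_neg, dotProduct_smul,
      hgorth qlast hqlmem, smul_eq_mul]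
    simp [hG]
  have ha : a = -1 := by
    have : a * G = -1 * G := by rw [← hga, hga']; ring
    exact mul_right_cancel₀ hGne this
  -- b ≠ 0
  have hgb : ghat ⬝ᵥ (xhat (k + 1) - xhat k) = b * G := by
    rw [← hdkw, dotProduct_add, dotProduct_smul, hgorth w hw, smul_eq_mul]
    ring
  have hgb' : ghat ⬝ᵥ (xhat (k + 1) - xhat k)
      = -((xhat (k + 1) - xhat k) ⬝ᵥ H *ᵥ (xhat (k + 1) - xhat k)) := by
    have h1 := horth (k + 1) _ (dmem k)
    have h2 : H *ᵥ xhat (k + 1) + c = (H *ᵥ xhat k + c) + H *ᵥ (xhat (k + 1) - xhat k) := by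
      rw [Matrix.mulVec_sub]
      abel
    rw [h2, add_dotProduct, ← hghat] at h1
    rw [dotProduct_comm (H *ᵥ (xhat (k + 1) - xhat k)), sym] at h1
    linarith
  have hbne : b ≠ 0 := by
    intro hb
    rw [hb, zero_mul] at hgb
    rw [hgb] at hgb'
    have := hzero _ (by linarith : (xhat (k + 1) - xhat k) ⬝ᵥ H *ᵥ (xhat (k + 1) - xhat k) = 0)
    exact dnz k le_rfl this
  -- v := b • qk + d k is in K k and H-orthogonal to K k, hence zero
  set v : Fin n → ℝ := b • qk + (xhat (k + 1) - xhat k) with hv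
  have hvmem : v ∈ krylov g0 H k := by
    have : v = b • y + w := by
      rw [hv, ← hqky, ← hdkw, ha]
      simp only [smul_add, smul_smul]
      module
    rw [this]
    exact add_mem (Submodule.smul_mem _ _ hy) hw
  have hvorthd : ∀ i : Fin k, v ⬝ᵥ H *ᵥ (xhat ((i : ℕ) + 1) - xhat (i : ℕ)) = 0 := by
    intro i
    rw [hv, add_dotProduct, smul_dotProduct, smul_eq_mul,
      key1 _ i.2, sym, conj _ _ i.2]
    ring
  have hvorth : ∀ u ∈ krylov g0 H k, v ⬝ᵥ H *ᵥ u = 0 := by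
    intro u hu
    rw [← hdspan] at hu
    induction hu using Submodule.span_induction with
    | mem x hx =>
      rcases hx with ⟨i, rfl⟩
      exact hvorthd i
    | zero => simp
    | add x y' _ _ hx hy' => rw [Matrix.mulVec_add, dotProduct_add, hx, hy']; ring
    | smul t x _ hx => rw [Matrix.mulVec_smul, dotProduct_smul, hx, smul_zero]
  have hv0 : v = 0 := hzero v (hvorth v hvmem)
  have hfinal : qk = (-b⁻¹) • (xhat (k + 1) - xhat k) := by
    have h1 : b • qk = -(xhat (k + 1) - xhat k) := by
      rw [← add_eq_zero_iff_eq_neg, ← hv]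
      exact hv0
    have := congrArg (fun w => b⁻¹ • w) h1
    simp only [smul_smul, inv_mul_cancel₀ hbne, one_smul, smul_neg] at this
    rw [this, neg_smul]
  exact ⟨-b⁻¹, by simp [hbne], hfinal⟩
end

section
/- Let Q be an n×k real matrix of full column rank, H symmetric positive definite, and σ > 0. Then the matrix B = σ(I - Q(Q^T Q)^{-1}Q^T) + H Q (Q^T H Q)^{-1} Q^T H is symmetric positive definite. -/
open Matrix

private lemma mulVec_inj {n k : ℕ} (Q : Matrix (Fin n) (Fin k) ℝ)
    (hQ : LinearIndependent ℝ (fun j : Fin k => Qᵀ j))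
    {c : Fin k → ℝ} (hc : Q *ᵥ c = 0) : c = 0 := by
  have := Fintype.linearIndependent_iff.mp hQ c ?_
  · funext j; exact this j
  · funext i
    have := congrFun hc i
    simpa [Matrix.mulVec, dotProduct, mul_comm] using this

private lemma conj_posDef {n k : ℕ} (H : Matrix (Fin n) (Fin n) ℝ) (hH : H.PosDef)
    (Q : Matrix (Fin n) (Fin k) ℝ)
    (hQ : LinearIndependent ℝ (fun j : Fin k => Qᵀ j)) :
    (Qᵀ * H * Q).PosDef := by
  refine Matrix.posDef_iff_dotProduct_mulVec.mpr ⟨?_, ?_⟩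
  · have := Matrix.isHermitian_conjTranspose_mul_mul Q hH.isHermitian
    simpa [Matrix.conjTranspose_eq_transpose_of_trivial] using this
  · intro c hc
    have hy : Q *ᵥ c ≠ 0 := fun h => hc (mulVec_inj Q hQ h)
    have key : star c ⬝ᵥ ((Qᵀ * H * Q) *ᵥ c) = star (Q *ᵥ c) ⬝ᵥ (H *ᵥ (Q *ᵥ c)) := by
      rw [← Matrix.mulVec_mulVec, ← Matrix.mulVec_mulVec, star_trivial, star_trivial,
        Matrix.dotProduct_mulVec, Matrix.vecMul_transpose]
    rw [key]
    exact hH.dotProduct_mulVec_pos hy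

theorem B_posDef {n k : ℕ}
    (H : Matrix (Fin n) (Fin n) ℝ) (hH : H.PosDef)
    (Q : Matrix (Fin n) (Fin k) ℝ)
    (hQ : LinearIndependent ℝ (fun j : Fin k => Qᵀ j))
    (σ : ℝ) (hσ : 0 < σ)
    (B : Matrix (Fin n) (Fin n) ℝ)
    (hB : B = σ • (1 - Q * (Qᵀ * Q)⁻¹ * Qᵀ) + H * Q * (Qᵀ * H * Q)⁻¹ * Qᵀ * H) :
    B.PosDef := by
  have hN : (Qᵀ * Q).PosDef := by
    have := conj_posDef 1 Matrix.PosDef.one Q hQ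
    simpa [Matrix.mul_one] using this
  have hM : (Qᵀ * H * Q).PosDef := conj_posDef H hH Q hQ
  have hMinv : (Qᵀ * H * Q)⁻¹.PosDef := hM.inv
  set N := Qᵀ * Q with hNdef
  set M := Qᵀ * H * Q with hMdef
  have hNunit : IsUnit N.det := isUnit_iff_ne_zero.mpr (ne_of_gt hN.det_pos)
  have hMunit : IsUnit M.det := isUnit_iff_ne_zero.mpr (ne_of_gt hM.det_pos)
  set P : Matrix (Fin n) (Fin n) ℝ := Q * N⁻¹ * Qᵀ with hPdef
  have hHs : Hᵀ = H := hH.isHermitian.eq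
  have hNs : Nᵀ = N := hN.isHermitian.eq
  have hMs : Mᵀ = M := hM.isHermitian.eq
  have hNis : (N⁻¹)ᵀ = N⁻¹ := by rw [Matrix.transpose_nonsing_inv, hNs]
  have hMis : (M⁻¹)ᵀ = M⁻¹ := by rw [Matrix.transpose_nonsing_inv, hMs]
  have hPs : Pᵀ = P := by
    simp [hPdef, Matrix.transpose_mul, hNis, Matrix.mul_assoc]
  have hPP : P * P = P := by
    have h1 : P * P = Q * N⁻¹ * N * N⁻¹ * Qᵀ := by
      simp only [hPdef, hNdef, Matrix.mul_assoc]
    rw [h1, Matrix.nonsing_inv_mul_cancel_right _ _ hNunit]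
  refine Matrix.posDef_iff_dotProduct_mulVec.mpr ⟨?_, ?_⟩
  · have hBt : Bᵀ = B := by
      rw [hB]
      rw [Matrix.transpose_add, Matrix.transpose_smul, Matrix.transpose_sub,
        Matrix.transpose_one, hPs]
      congr 1
      simp only [Matrix.transpose_mul, Matrix.transpose_transpose, hHs, hMis]
      simp only [Matrix.mul_assoc]
    show Bᴴ = B
    simpa [Matrix.conjTranspose_eq_transpose_of_trivial] using hBt
  · intro x hx
    rw [hB]
    set z : Fin n → ℝ := (1 - P) *ᵥ x with hzdef
    set y : Fin k → ℝ := Qᵀ *ᵥ (H *ᵥ x) with hydef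
    have hxH : x ᵥ* H = H *ᵥ x := by rw [← Matrix.mulVec_transpose, hHs]
    have hfirst : star x ⬝ᵥ ((σ • (1 - P)) *ᵥ x) = σ * (z ⬝ᵥ z) := by
      have h1Ps : (1 - P)ᵀ = 1 - P := by
        rw [Matrix.transpose_sub, Matrix.transpose_one, hPs]
      have h1PP : (1 - P) * (1 - P) = 1 - P := by
        have h2 : (1 - P) * (1 - P) = 1 - P - P + P * P := by noncomm_ring
        rw [h2, hPP]; abel
      calc star x ⬝ᵥ ((σ • (1 - P)) *ᵥ x)
          = σ * (x ⬝ᵥ ((1 - P) *ᵥ x)) := by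
            rw [star_trivial, Matrix.smul_mulVec, dotProduct_smul, smul_eq_mul]
        _ = σ * (x ⬝ᵥ (((1 - P) * (1 - P)) *ᵥ x)) := by rw [h1PP]
        _ = σ * (z ⬝ᵥ z) := by
            rw [← Matrix.mulVec_mulVec, ← hzdef, Matrix.dotProduct_mulVec,
              ← Matrix.mulVec_transpose, h1Ps, ← hzdef]
    have hsecond : star x ⬝ᵥ ((H * Q * M⁻¹ * Qᵀ * H) *ᵥ x) = y ⬝ᵥ (M⁻¹ *ᵥ y) := by
      rw [star_trivial]
      have h1 : (H * Q * M⁻¹ * Qᵀ * H) *ᵥ x = H *ᵥ (Q *ᵥ (M⁻¹ *ᵥ y)) := by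
        simp only [hydef, ← Matrix.mulVec_mulVec, Matrix.mul_assoc]
      rw [h1, Matrix.dotProduct_mulVec, hxH, Matrix.dotProduct_mulVec,
        ← Matrix.mulVec_transpose, ← hydef]
    rw [Matrix.add_mulVec, dotProduct_add, hfirst, hsecond]
    by_cases hz : z = 0
    · have hxP : P *ᵥ x = x := by
        have h0 : x - P *ᵥ x = 0 := by
          have := hz
          rw [hzdef, Matrix.sub_mulVec, Matrix.one_mulVec] at this
          exact this
        have := sub_eq_zero.mp h0
        exact this.symm
      set c : Fin k → ℝ := N⁻¹ *ᵥ (Qᵀ *ᵥ x) with hcdef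
      have hQc : Q *ᵥ c = x := by
        rw [hcdef, Matrix.mulVec_mulVec, Matrix.mulVec_mulVec, ← hPdef, hxP]
      have hc : c ≠ 0 := fun h => hx (by rw [← hQc, h, Matrix.mulVec_zero])
      have hy' : y = M *ᵥ c := by
        rw [hydef, ← hQc, Matrix.mulVec_mulVec, Matrix.mulVec_mulVec, ← hMdef]
      have hMy : M⁻¹ *ᵥ y = c := by
        rw [hy', Matrix.mulVec_mulVec, Matrix.nonsing_inv_mul _ hMunit, Matrix.one_mulVec]
      have hpos : 0 < c ⬝ᵥ (M *ᵥ c) := by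
        have := hM.dotProduct_mulVec_pos hc
        rwa [star_trivial] at this
      rw [hz, hMy, hy']
      simp only [dotProduct_zero, mul_zero, zero_add]
      rwa [dotProduct_comm]
    · have h1 : 0 < σ * (z ⬝ᵥ z) := by
        apply mul_pos hσ
        have := Matrix.dotProduct_self_star_pos_iff (v := z)
        simpa using this.mpr hz
      have h2 : 0 ≤ y ⬝ᵥ (M⁻¹ *ᵥ y) := by
        have := hMinv.posSemidef.dotProduct_mulVec_nonneg y
        simpa using this
      linarith
end

section
/- In the setting of Proposition 2, with p_k(x) the solution of B_k p = -(Hx+c) for the full-memory approximation B_k, there exists a unique σ_k > 0, namely σ_k = -(q_k^T H q_k)/(q_k^T (Hx+c)) with q_k = -ĝ_k + ((ĝ_k^T H q_{k-1})/(q_{k-1}^T H q_{k-1}))q_{k-1}, such that x + p_k(x) is the minimizer of f over x_0 + K_{k+1}(g_0,H). -/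
open Matrix

namespace NewtonAux

variable {n : ℕ}

lemma dot_symm (H : Matrix (Fin n) (Fin n) ℝ) (hH : Hᵀ = H) (u v : Fin n → ℝ) :
    u ⬝ᵥ H.mulVec v = v ⬝ᵥ H.mulVec u := by
  conv_lhs => rw [dotProduct_mulVec, ← hH, vecMul_transpose, dotProduct_comm]

lemma quad_expand (H : Matrix (Fin n) (Fin n) ℝ) (hH : Hᵀ = H) (c : Fin n → ℝ)
    (f : (Fin n → ℝ) → ℝ)
    (hf : ∀ x, f x = (1 / 2) * (x ⬝ᵥ H.mulVec x) + c ⬝ᵥ x) (z y : Fin n → ℝ) :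
    f y = f z + (H.mulVec z + c) ⬝ᵥ (y - z) + (1/2) * ((y - z) ⬝ᵥ H.mulVec (y - z)) := by
  have hs := dot_symm H hH z y
  simp only [hf, mulVec_sub, mulVec_add, dotProduct_sub, dotProduct_add, sub_dotProduct,
    add_dotProduct]
  ring_nf
  linarith [hs, dotProduct_comm (H.mulVec z) y, dotProduct_comm (H.mulVec z) z]

lemma key_nonneg {a b : ℝ} (hb : 0 ≤ b) (h : ∀ t : ℝ, 0 ≤ t * a + t ^ 2 * b) : a = 0 := by
  by_contra ha
  have h1 := h (-(a / (b + 1)))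
  have hb1 : 0 < b + 1 := by linarith
  have ha2 : 0 < a ^ 2 := by positivity
  rw [neg_sq, div_pow] at h1
  have h3 : 0 ≤ (-(a/(b+1))*a + a^2/(b+1)^2*b) * (b+1)^2 :=
    mul_nonneg h1 (sq_nonneg (b+1))
  have h4 : (-(a/(b+1))*a + a^2/(b+1)^2*b) * (b+1)^2 = -a^2 := by
    field_simp; ring
  rw [h4] at h3
  linarith

lemma min_iff (H : Matrix (Fin n) (Fin n) ℝ) (hH : H.PosDef) (c : Fin n → ℝ)
    (f : (Fin n → ℝ) → ℝ)
    (hf : ∀ x, f x = (1 / 2) * (x ⬝ᵥ H.mulVec x) + c ⬝ᵥ x)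
    (S : Submodule ℝ (Fin n → ℝ)) (x0 z : Fin n → ℝ) (hz : z - x0 ∈ S) :
    (∀ y, y - x0 ∈ S → f z ≤ f y) ↔ ∀ s ∈ S, (H.mulVec z + c) ⬝ᵥ s = 0 := by
  have hsym : Hᵀ = H := hH.isHermitian.eq
  constructor
  · intro hmin s hs
    apply key_nonneg (b := (1/2) * (s ⬝ᵥ H.mulVec s))
    · have := hH.posSemidef.dotProduct_mulVec_nonneg s
      simp only [star_trivial] at this
      linarith
    · intro t
      have hy : (z + t • s) - x0 ∈ S := by
        have : (z + t • s) - x0 = (z - x0) + t • s := by abel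
        rw [this]; exact S.add_mem hz (S.smul_mem t hs)
      have h1 := hmin (z + t • s) hy
      have h2 := quad_expand H hsym c f hf z (z + t • s)
      simp only [add_sub_cancel_left, dotProduct_smul, smul_dotProduct, mulVec_smul,
        smul_eq_mul] at h2
      rw [h2] at h1
      nlinarith [h1]
  · intro horth y hy
    have h2 := quad_expand H hsym c f hf z y
    have hmem : y - z ∈ S := by
      have : y - z = (y - x0) - (z - x0) := by abel
      rw [this]; exact S.sub_mem hy hz
    rw [h2, horth _ hmem]
    have := hH.posSemidef.dotProduct_mulVec_nonneg (y - z)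
    simp only [star_trivial] at this
    linarith

lemma krylov_mono (b : Fin n → ℝ) (A : Matrix (Fin n) (Fin n) ℝ) {j j' : ℕ} (h : j ≤ j') :
    krylov b A j ≤ krylov b A j' := by
  apply Submodule.span_mono
  rintro _ ⟨i, rfl⟩
  exact ⟨⟨i, lt_of_lt_of_le i.2 h⟩, rfl⟩

lemma self_mem_krylov (b : Fin n → ℝ) (A : Matrix (Fin n) (Fin n) ℝ) {j : ℕ} (h : 1 ≤ j) :
    b ∈ krylov b A j := by
  apply Submodule.subset_span
  exact ⟨⟨0, h⟩, by simp⟩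

lemma mulVec_mem_krylov (b : Fin n → ℝ) (A : Matrix (Fin n) (Fin n) ℝ) {j : ℕ}
    {v : Fin n → ℝ} (hv : v ∈ krylov b A j) : A.mulVec v ∈ krylov b A (j + 1) := by
  induction hv using Submodule.span_induction with
  | mem w hw =>
    obtain ⟨i, rfl⟩ := hw
    rw [Matrix.mulVec_mulVec, ← pow_succ']
    exact Submodule.subset_span ⟨⟨(i : ℕ) + 1, by omega⟩, rfl⟩
  | zero => simp [Matrix.mulVec_zero, Submodule.zero_mem]
  | add u w _ _ hu hw => rw [Matrix.mulVec_add]; exact Submodule.add_mem _ hu hw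
  | smul t u _ hu => rw [Matrix.mulVec_smul]; exact Submodule.smul_mem _ t hu

lemma finrank_krylov_le (b : Fin n → ℝ) (A : Matrix (Fin n) (Fin n) ℝ) (j : ℕ) :
    Module.finrank ℝ (krylov b A j) ≤ j := by
  have := finrank_range_le_card (R := ℝ) (fun i : Fin j => (A ^ (i : ℕ)).mulVec b)
  rw [Fintype.card_fin] at this
  exact this

lemma sum_dot {ι : Type*} (s : Finset ι) (v : ι → (Fin n → ℝ)) (w : Fin n → ℝ) :
    (∑ j ∈ s, v j) ⬝ᵥ w = ∑ j ∈ s, v j ⬝ᵥ w := by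
  simp only [dotProduct, Finset.sum_apply, Finset.sum_mul]
  exact Finset.sum_comm

end NewtonAux

set_option maxHeartbeats 4000000

theorem unique_sigma_for_newton_step {n : ℕ}
    (H : Matrix (Fin n) (Fin n) ℝ) (hH : H.PosDef)
    (c x0 : Fin n → ℝ) (g0 : Fin n → ℝ) (hg0 : g0 = H.mulVec x0 + c)
    (f : (Fin n → ℝ) → ℝ)
    (hf : ∀ x, f x = (1 / 2) * (x ⬝ᵥ H.mulVec x) + c ⬝ᵥ x)
    (xhat : ℕ → (Fin n → ℝ))
    (hmem : ∀ j : ℕ, xhat j - x0 ∈ krylov g0 H j)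
    (hmin : ∀ j : ℕ, ∀ y : Fin n → ℝ, y - x0 ∈ krylov g0 H j → f (xhat j) ≤ f y)
    (k : ℕ) (hk : 1 ≤ k)
    (hdim : Module.finrank ℝ (krylov g0 H k) = k)
    (ghat : Fin n → ℝ) (hghat : ghat = H.mulVec (xhat k) + c) (hgne : ghat ≠ 0)
    (q : Fin k → (Fin n → ℝ)) (lam : Fin k → ℝ) (hlam : ∀ i, lam i ≠ 0)
    (hq : ∀ i : Fin k, q i = lam i • (xhat ((i : ℕ) + 1) - xhat (i : ℕ)))
    (Q : Matrix (Fin n) (Fin k) ℝ) (hQ : ∀ i j, Q i j = q (Fin.rev j) i)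
    (x : Fin n → ℝ) (hx : x - x0 ∈ krylov g0 H k)
    (qlast : Fin n → ℝ) (hqlast : qlast = q ⟨k - 1, by omega⟩)
    (qk : Fin n → ℝ)
    (hqk : qk = -ghat + ((ghat ⬝ᵥ H.mulVec qlast) / (qlast ⬝ᵥ H.mulVec qlast)) • qlast)
    (σk : ℝ)
    (hσk : σk = -(qk ⬝ᵥ H.mulVec qk) / (qk ⬝ᵥ (H.mulVec x + c)))
    (hσkpos : 0 < σk)
    (B : ℝ → Matrix (Fin n) (Fin n) ℝ)
    (hB : ∀ σ : ℝ, B σ =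
      σ • (1 - Q * (Qᵀ * Q)⁻¹ * Qᵀ) + H * Q * (Qᵀ * H * Q)⁻¹ * Qᵀ * H) :
    ∀ σ : ℝ, 0 < σ → ∀ p : Fin n → ℝ, (B σ).mulVec p = -(H.mulVec x + c) →
      (((x + p) - x0 ∈ krylov g0 H (k + 1) ∧
          ∀ y : Fin n → ℝ, y - x0 ∈ krylov g0 H (k + 1) → f (x + p) ≤ f y) ↔
        σ = σk) := by
  intro σ hσ p hp
  have hsym : Hᵀ = H := hH.isHermitian.eq
  have hds := NewtonAux.dot_symm H hsym
  have qd : ∀ v : Fin n → ℝ, v ≠ 0 → 0 < v ⬝ᵥ H.mulVec v := by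
    intro v hv
    simpa using hH.dotProduct_mulVec_pos hv
  -- gradients at the Krylov minimizers are orthogonal to the Krylov spaces
  have grad_perp : ∀ j : ℕ, ∀ s ∈ krylov g0 H j, (H.mulVec (xhat j) + c) ⬝ᵥ s = 0 :=
    fun j => (NewtonAux.min_iff H hH c f hf _ x0 _ (hmem j)).1 (hmin j)
  have grad_mem : ∀ j : ℕ, H.mulVec (xhat j) + c ∈ krylov g0 H (j + 1) := by
    intro j
    have h1 : H.mulVec (xhat j) + c = H.mulVec (xhat j - x0) + g0 := by
      rw [hg0, Matrix.mulVec_sub]; abel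
    rw [h1]
    exact Submodule.add_mem _ (NewtonAux.mulVec_mem_krylov g0 H (hmem j))
      (NewtonAux.self_mem_krylov g0 H (by omega))
  have hqmem : ∀ i : Fin k, q i ∈ krylov g0 H ((i : ℕ) + 1) := by
    intro i
    rw [hq i]
    refine Submodule.smul_mem _ _ ?_
    have h1 : xhat ((i : ℕ) + 1) - xhat (i : ℕ)
        = (xhat ((i : ℕ) + 1) - x0) - (xhat (i : ℕ) - x0) := by abel
    rw [h1]
    exact Submodule.sub_mem _ (hmem _) (NewtonAux.krylov_mono g0 H (by omega) (hmem _))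
  have hqKk : ∀ i : Fin k, q i ∈ krylov g0 H k :=
    fun i => NewtonAux.krylov_mono g0 H (by omega) (hqmem i)
  have hghat_perp : ∀ s ∈ krylov g0 H k, ghat ⬝ᵥ s = 0 := by
    intro s hs; rw [hghat]; exact grad_perp k s hs
  -- each conjugate difference is nonzero
  have hqne : ∀ i : Fin k, q i ≠ 0 := by
    intro i hqi0
    have hd : xhat ((i : ℕ) + 1) = xhat (i : ℕ) := by
      have h1 := (hq i).symm.trans hqi0
      rcases smul_eq_zero.1 h1 with h | h
      · exact absurd h (hlam i)
      · exact sub_eq_zero.1 h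
    have hgi0 : H.mulVec (xhat (i : ℕ)) + c = 0 := by
      apply dotProduct_self_eq_zero.1
      have h2 := grad_perp ((i : ℕ) + 1) (H.mulVec (xhat (i : ℕ)) + c)
        (grad_mem (i : ℕ))
      rwa [hd] at h2
    have hglob : ∀ y, f (xhat (i : ℕ)) ≤ f y := by
      intro y
      exact (NewtonAux.min_iff H hH c f hf ⊤ x0 (xhat (i : ℕ)) Submodule.mem_top).2
        (fun s _ => by rw [hgi0, zero_dotProduct]) y Submodule.mem_top
    have hkglob : ∀ y, f (xhat k) ≤ f y := fun y =>
      le_trans (hmin k (xhat (i : ℕ))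
        (NewtonAux.krylov_mono g0 H (by omega) (hmem (i : ℕ)))) (hglob y)
    have h0 := (NewtonAux.min_iff H hH c f hf ⊤ x0 (xhat k) Submodule.mem_top).1
      (fun y _ => hkglob y) ghat Submodule.mem_top
    rw [← hghat] at h0
    exact hgne (dotProduct_self_eq_zero.1 h0)
  -- conjugacy
  have hconj0 : ∀ i j : Fin k, (i : ℕ) < (j : ℕ) → q i ⬝ᵥ H.mulVec (q j) = 0 := by
    intro i j hij
    have h1 : H.mulVec (q j) = lam j • ((H.mulVec (xhat ((j : ℕ) + 1)) + c)
        - (H.mulVec (xhat (j : ℕ)) + c)) := by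
      rw [hq j, Matrix.mulVec_smul, Matrix.mulVec_sub]
      congr 1; abel
    have e1 : q i ⬝ᵥ (H.mulVec (xhat ((j : ℕ) + 1)) + c) = 0 := by
      rw [dotProduct_comm]
      exact grad_perp _ _ (NewtonAux.krylov_mono g0 H (by omega) (hqmem i))
    have e2 : q i ⬝ᵥ (H.mulVec (xhat (j : ℕ)) + c) = 0 := by
      rw [dotProduct_comm]
      exact grad_perp _ _ (NewtonAux.krylov_mono g0 H (by omega) (hqmem i))
    rw [h1, dotProduct_smul, dotProduct_sub, e1, e2]
    simp
  have hconj : ∀ i j : Fin k, i ≠ j → q i ⬝ᵥ H.mulVec (q j) = 0 := by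
    intro i j hij
    rcases lt_or_gt_of_ne (fun h => hij (Fin.ext h) : (i : ℕ) ≠ (j : ℕ)) with h | h
    · exact hconj0 i j h
    · rw [hds]; exact hconj0 j i h
  -- linear independence and spanning
  have hlin : LinearIndependent ℝ q := by
    rw [Fintype.linearIndependent_iff]
    intro gc hgc i
    have h1 : (∑ j, gc j • q j) ⬝ᵥ H.mulVec (q i) = 0 := by rw [hgc, zero_dotProduct]
    rw [NewtonAux.sum_dot] at h1
    have h2 : ∀ j ∈ Finset.univ, j ≠ i → (gc j • q j) ⬝ᵥ H.mulVec (q i) = 0 := by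
      intro j _ hji
      rw [smul_dotProduct, hconj j i hji, smul_zero]
    rw [Finset.sum_eq_single_of_mem i (Finset.mem_univ i) h2, smul_dotProduct,
      smul_eq_mul] at h1
    rcases mul_eq_zero.1 h1 with h | h
    · exact h
    · exact absurd h (ne_of_gt (qd (q i) (hqne i)))
  have hspan : Submodule.span ℝ (Set.range q) = krylov g0 H k := by
    apply Submodule.eq_of_le_of_finrank_le
    · rw [Submodule.span_le]
      rintro _ ⟨i, rfl⟩
      exact hqKk i
    · rw [hdim, finrank_span_eq_card hlin, Fintype.card_fin]
  -- matrix Q facts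
  have hQT : ∀ v : Fin n → ℝ, Qᵀ.mulVec v = fun j => q (Fin.rev j) ⬝ᵥ v := by
    intro v; funext j
    simp [Matrix.mulVec, dotProduct, hQ, Matrix.transpose_apply]
  have hQmul : ∀ a : Fin k → ℝ, Q.mulVec a = ∑ j, a j • q (Fin.rev j) := by
    intro a; funext i
    simp only [Matrix.mulVec, dotProduct, hQ, Finset.sum_apply, Pi.smul_apply,
      smul_eq_mul]
    exact Finset.sum_congr rfl fun j _ => mul_comm _ _
  have hQmemK : ∀ a : Fin k → ℝ, Q.mulVec a ∈ krylov g0 H k := by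
    intro a; rw [hQmul]
    exact Submodule.sum_mem _ fun j _ => Submodule.smul_mem _ _ (hqKk _)
  have hQinj : ∀ a : Fin k → ℝ, Q.mulVec a = 0 → a = 0 := by
    intro a ha
    have hlin' : LinearIndependent ℝ (q ∘ Fin.rev) := hlin.comp _ Fin.rev_injective
    have h1 := Fintype.linearIndependent_iff.1 hlin' a
    rw [hQmul] at ha
    funext j
    exact h1 ha j
  have hQdot : ∀ (a : Fin k → ℝ) (u : Fin n → ℝ),
      a ⬝ᵥ Qᵀ.mulVec u = (Q.mulVec a) ⬝ᵥ u := by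
    intro a u
    rw [Matrix.dotProduct_mulVec, Matrix.vecMul_transpose]
  -- invertibility of the Gram matrices
  have hGU : IsUnit (Qᵀ * Q).det := by
    rw [← Matrix.isUnit_iff_isUnit_det, ← Matrix.mulVec_injective_iff_isUnit]
    intro a b hab
    have h0 : (Qᵀ * Q).mulVec (a - b) = 0 := by
      rw [Matrix.mulVec_sub, hab, sub_self]
    have h1 : Q.mulVec (a - b) = 0 := by
      apply dotProduct_self_eq_zero.1
      have h2 : (a - b) ⬝ᵥ (Qᵀ * Q).mulVec (a - b) = 0 := by rw [h0, dotProduct_zero]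
      rwa [← Matrix.mulVec_mulVec, hQdot] at h2
    have := hQinj _ h1
    exact sub_eq_zero.1 this
  have hDU : IsUnit (Qᵀ * H * Q).det := by
    rw [← Matrix.isUnit_iff_isUnit_det, ← Matrix.mulVec_injective_iff_isUnit]
    intro a b hab
    have h0 : (Qᵀ * H * Q).mulVec (a - b) = 0 := by
      rw [Matrix.mulVec_sub, hab, sub_self]
    have h2 : (a - b) ⬝ᵥ (Qᵀ * H * Q).mulVec (a - b) = 0 := by rw [h0, dotProduct_zero]
    have h3 : (Qᵀ * H * Q).mulVec (a - b) = Qᵀ.mulVec (H.mulVec (Q.mulVec (a - b))) := by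
      rw [Matrix.mulVec_mulVec, Matrix.mulVec_mulVec]
    rw [h3, hQdot] at h2
    have h1 : Q.mulVec (a - b) = 0 := by
      by_contra hne
      exact absurd h2 (ne_of_gt (qd _ hne))
    exact sub_eq_zero.1 (hQinj _ h1)
  -- abbreviations (set)
  set P : Matrix (Fin n) (Fin n) ℝ := Q * (Qᵀ * Q)⁻¹ * Qᵀ with hPdef
  set M : Matrix (Fin n) (Fin n) ℝ := H * Q * (Qᵀ * H * Q)⁻¹ * Qᵀ * H with hMdef
  set pQ : Fin n → ℝ := P.mulVec p with hpQdef
  set pperp : Fin n → ℝ := p - pQ with hpperpdef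
  set β : ℝ := (ghat ⬝ᵥ H.mulVec qlast) / (qlast ⬝ᵥ H.mulVec qlast) with hbdef
  -- span-orthogonality helpers
  have hspan_dot : ∀ v : Fin n → ℝ, (∀ i : Fin k, v ⬝ᵥ q i = 0) →
      ∀ s ∈ krylov g0 H k, v ⬝ᵥ s = 0 := by
    intro v hv s hs
    rw [← hspan] at hs
    induction hs using Submodule.span_induction with
    | mem w hw => obtain ⟨i, rfl⟩ := hw; exact hv i
    | zero => simp
    | add u w _ _ hu hw => rw [dotProduct_add, hu, hw, add_zero]
    | smul t u _ hu => rw [dotProduct_smul, hu, smul_zero]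
  have hspan_dotH : ∀ v : Fin n → ℝ, (∀ i : Fin k, v ⬝ᵥ H.mulVec (q i) = 0) →
      ∀ s ∈ krylov g0 H k, v ⬝ᵥ H.mulVec s = 0 := by
    intro v hv s hs
    rw [← hspan] at hs
    induction hs using Submodule.span_induction with
    | mem w hw => obtain ⟨i, rfl⟩ := hw; exact hv i
    | zero => simp
    | add u w _ _ hu hw =>
      rw [Matrix.mulVec_add, dotProduct_add, hu, hw, add_zero]
    | smul t u _ hu => rw [Matrix.mulVec_smul, dotProduct_smul, hu, smul_zero]
  -- basic mulVec splitting facts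
  have hGact : ∀ u : Fin k → ℝ, (Qᵀ * Q)⁻¹.mulVec ((Qᵀ * Q).mulVec u) = u := by
    intro u
    rw [Matrix.mulVec_mulVec, Matrix.nonsing_inv_mul _ hGU, Matrix.one_mulVec]
  have hGact2 : ∀ u : Fin k → ℝ, (Qᵀ * Q).mulVec ((Qᵀ * Q)⁻¹.mulVec u) = u := by
    intro u
    rw [Matrix.mulVec_mulVec, Matrix.mul_nonsing_inv _ hGU, Matrix.one_mulVec]
  have hDact : ∀ u : Fin k → ℝ, (Qᵀ * H * Q)⁻¹.mulVec ((Qᵀ * H * Q).mulVec u) = u := by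
    intro u
    rw [Matrix.mulVec_mulVec, Matrix.nonsing_inv_mul _ hDU, Matrix.one_mulVec]
  have hDsplit : ∀ v : Fin k → ℝ,
      (Qᵀ * H * Q).mulVec v = Qᵀ.mulVec (H.mulVec (Q.mulVec v)) := by
    intro v; simp only [← Matrix.mulVec_mulVec]
  have hMsplit : ∀ v : Fin n → ℝ, M.mulVec v
      = H.mulVec (Q.mulVec ((Qᵀ * H * Q)⁻¹.mulVec (Qᵀ.mulVec (H.mulVec v)))) := by
    intro v; rw [hMdef]; simp only [← Matrix.mulVec_mulVec]
  have hpQ_eq : pQ = Q.mulVec ((Qᵀ * Q)⁻¹.mulVec (Qᵀ.mulVec p)) := by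
    rw [hpQdef, hPdef]; simp only [← Matrix.mulVec_mulVec]
  have hpQK : pQ ∈ krylov g0 H k := by rw [hpQ_eq]; exact hQmemK _
  have hMact : ∀ b : Fin k → ℝ, M.mulVec (Q.mulVec b) = H.mulVec (Q.mulVec b) := by
    intro b
    rw [hMsplit, ← hDsplit, hDact]
  have hQTperp : Qᵀ.mulVec pperp = 0 := by
    rw [hpperpdef, Matrix.mulVec_sub, hpQ_eq, Matrix.mulVec_mulVec, hGact2, sub_self]
  have hpperp_dot : ∀ s ∈ krylov g0 H k, pperp ⬝ᵥ s = 0 := by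
    apply hspan_dot
    intro i
    have h1 := congrFun ((hQT pperp).symm.trans hQTperp) (Fin.rev i)
    rw [Fin.rev_rev] at h1
    rw [dotProduct_comm]
    simpa using h1
  -- the equation satisfied by p, decomposed
  have hpdecomp : p = pQ + pperp := by rw [hpperpdef]; abel
  have heq1 : σ • pperp + (H.mulVec pQ + M.mulVec pperp) = -(H.mulVec x + c) := by
    rw [hB σ, Matrix.add_mulVec, Matrix.smul_mulVec, Matrix.sub_mulVec,
      Matrix.one_mulVec, ← hpQdef, ← hpperpdef] at hp
    have h2 : M.mulVec p = H.mulVec pQ + M.mulVec pperp := by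
      conv_lhs => rw [hpdecomp]
      rw [Matrix.mulVec_add]
      congr 1
      rw [hpQ_eq, hMact]
    rw [← h2]
    exact hp
  -- membership facts
  have hgK1 : H.mulVec x + c ∈ krylov g0 H (k + 1) := by
    have h1 : H.mulVec x + c = H.mulVec (x - x0) + g0 := by
      rw [hg0, Matrix.mulVec_sub]; abel
    rw [h1]
    exact Submodule.add_mem _ (NewtonAux.mulVec_mem_krylov g0 H hx)
      (NewtonAux.self_mem_krylov g0 H (by omega))
  have hghatK1 : ghat ∈ krylov g0 H (k + 1) := by rw [hghat]; exact grad_mem k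
  have hppK : pperp ∈ krylov g0 H (k + 1) := by
    have h1 : σ • pperp = -(H.mulVec x + c) - (H.mulVec pQ + M.mulVec pperp) := by
      rw [← heq1]; abel
    have h2 : pperp = σ⁻¹ • (-(H.mulVec x + c) - (H.mulVec pQ + M.mulVec pperp)) := by
      rw [← h1, smul_smul, inv_mul_cancel₀ (ne_of_gt hσ), one_smul]
    rw [h2]
    refine Submodule.smul_mem _ _ (Submodule.sub_mem _ (Submodule.neg_mem _ hgK1)
      (Submodule.add_mem _ ?_ ?_))
    · exact NewtonAux.mulVec_mem_krylov g0 H hpQK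
    · rw [hMsplit]
      exact NewtonAux.mulVec_mem_krylov g0 H (hQmemK _)
  -- positivity of ‖ghat‖²
  have hdpsn : ∀ v : Fin n → ℝ, 0 ≤ v ⬝ᵥ v :=
    fun v => Finset.sum_nonneg fun i _ => mul_self_nonneg _
  have hgg : 0 < ghat ⬝ᵥ ghat :=
    lt_of_le_of_ne (hdpsn ghat) (fun h => hgne (dotProduct_self_eq_zero.1 h.symm))
  -- K_{k+1} = K_k ⊕ span ghat
  have hsub : krylov g0 H k ⊔ Submodule.span ℝ {ghat} ≤ krylov g0 H (k + 1) :=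
    sup_le (NewtonAux.krylov_mono g0 H (by omega))
      ((Submodule.span_singleton_le_iff_mem _ _).2 hghatK1)
  have hinf : krylov g0 H k ⊓ Submodule.span ℝ {ghat} = ⊥ := by
    rw [Submodule.eq_bot_iff]
    rintro v ⟨hv1, hv2⟩
    obtain ⟨a, rfl⟩ := Submodule.mem_span_singleton.1 hv2
    have h1 := hghat_perp _ hv1
    rw [dotProduct_smul, smul_eq_mul] at h1
    rcases mul_eq_zero.1 h1 with h | h
    · rw [h, zero_smul]
    · exact absurd h (ne_of_gt hgg)
  have hK1 : krylov g0 H (k + 1) = krylov g0 H k ⊔ Submodule.span ℝ {ghat} := by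
    symm
    apply Submodule.eq_of_le_of_finrank_le hsub
    have h1 := Submodule.finrank_sup_add_finrank_inf_eq (krylov g0 H k)
      (Submodule.span ℝ {ghat})
    rw [hinf, hdim, finrank_span_singleton hgne, finrank_bot] at h1
    have h2 := NewtonAux.finrank_krylov_le g0 H (k + 1)
    omega
  -- pperp is a multiple of ghat
  obtain ⟨u, hu, v, hv, huv⟩ := Submodule.mem_sup.1 (hK1 ▸ hppK)
  obtain ⟨t, rfl⟩ := Submodule.mem_span_singleton.1 hv
  have hu0 : u = 0 := by
    apply dotProduct_self_eq_zero.1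
    have hueq : u = pperp - t • ghat := by rw [← huv]; abel
    nth_rewrite 1 [hueq]
    rw [sub_dotProduct, smul_dotProduct, hpperp_dot u hu,
      hghat_perp u hu, smul_zero, sub_zero]
  have ht : pperp = t • ghat := by rw [← huv, hu0, zero_add]
  -- facts about qlast and qk
  have hqlastK : qlast ∈ krylov g0 H k := by rw [hqlast]; exact hqKk _
  have hd0 : 0 < qlast ⬝ᵥ H.mulVec qlast := by rw [hqlast]; exact qd _ (hqne _)
  have hrev0 : q (Fin.rev (⟨0, hk⟩ : Fin k)) = qlast := by
    rw [hqlast]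
    rfl
  have hghat_Hqi : ∀ i : Fin k, (i : ℕ) < k - 1 → ghat ⬝ᵥ H.mulVec (q i) = 0 := by
    intro i hi
    exact hghat_perp _ (NewtonAux.krylov_mono g0 H (by omega)
      (NewtonAux.mulVec_mem_krylov g0 H (hqmem i)))
  -- action of M on ghat
  have hQa' : Q.mulVec (Pi.single (⟨0, hk⟩ : Fin k) β) = β • qlast := by
    rw [Matrix.mulVec_single]
    funext i
    rw [Pi.smul_apply, Matrix.col_apply, hQ, hrev0]
    simp [mul_comm]
  have hDa' : (Qᵀ * H * Q).mulVec (Pi.single (⟨0, hk⟩ : Fin k) β)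
      = Qᵀ.mulVec (H.mulVec ghat) := by
    rw [hDsplit, hQa', Matrix.mulVec_smul, Matrix.mulVec_smul, hQT, hQT]
    funext j
    by_cases hj : j = (⟨0, hk⟩ : Fin k)
    · subst hj
      simp only [Pi.smul_apply, hrev0, smul_eq_mul]
      rw [hbdef, div_mul_cancel₀ _ (ne_of_gt hd0), hds]
    · have hj1 : (1 : ℕ) ≤ (j : ℕ) := by
        rcases Nat.eq_zero_or_pos (j : ℕ) with h | h
        · exact absurd (Fin.ext h : j = ⟨0, hk⟩) hj
        · omega
      have h2 : q (Fin.rev j) ⬝ᵥ H.mulVec qlast = 0 := by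
        rw [← hrev0]
        exact hconj _ _ (fun hrr => hj (Fin.rev_injective hrr))
      have h3 : q (Fin.rev j) ⬝ᵥ H.mulVec ghat = 0 := by
        rw [hds]
        apply hghat_Hqi
        rw [Fin.val_rev]
        omega
      simp [h2, h3]
  have hMghat : M.mulVec ghat = β • H.mulVec qlast := by
    rw [hMsplit, ← hDa', hDact, hQa', Matrix.mulVec_smul]
  -- H-conjugacy of qk to all of K_k
  have hqkHqi : ∀ i : Fin k, qk ⬝ᵥ H.mulVec (q i) = 0 := by
    intro i
    rw [hqk, add_dotProduct, neg_dotProduct, smul_dotProduct,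
      smul_eq_mul]
    by_cases hi : i = (⟨k - 1, by omega⟩ : Fin k)
    · subst hi
      rw [← hqlast, hbdef, div_mul_cancel₀ _ (ne_of_gt hd0)]
      ring
    · have h1 : ghat ⬝ᵥ H.mulVec (q i) = 0 := by
        apply hghat_Hqi
        have : (i : ℕ) ≠ k - 1 := fun h => hi (Fin.ext h)
        omega
      have h2 : qlast ⬝ᵥ H.mulVec (q i) = 0 := by
        rw [hqlast]
        exact hconj _ _ (fun h => hi h.symm)
      rw [h1, h2]
      ring
  have hqk_Hs : ∀ s ∈ krylov g0 H k, qk ⬝ᵥ H.mulVec s = 0 := hspan_dotH qk hqkHqi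
  -- qk ⬝ g = -‖ghat‖²
  have hx_xhat : x - xhat k ∈ krylov g0 H k := by
    have h1 : x - xhat k = (x - x0) - (xhat k - x0) := by abel
    rw [h1]; exact Submodule.sub_mem _ hx (hmem k)
  have hqlast_ghat : qlast ⬝ᵥ ghat = 0 := by
    rw [dotProduct_comm]; exact hghat_perp _ hqlastK
  have hqkghat : qk ⬝ᵥ ghat = -(ghat ⬝ᵥ ghat) := by
    rw [hqk, add_dotProduct, neg_dotProduct, smul_dotProduct,
      smul_eq_mul, hqlast_ghat, mul_zero, add_zero]
  have hqkg : qk ⬝ᵥ (H.mulVec x + c) = -(ghat ⬝ᵥ ghat) := by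
    have h1 : H.mulVec x + c = ghat + H.mulVec (x - xhat k) := by
      rw [hghat, Matrix.mulVec_sub]; abel
    rw [h1, dotProduct_add, hqk_Hs _ hx_xhat, add_zero, hqkghat]
  -- qk ≠ 0 and positivity
  have hqkne : qk ≠ 0 := by
    intro h0
    have h1 : -ghat + β • qlast = 0 := by rw [← hqk, h0]
    have h2 : ghat = β • qlast := neg_add_eq_zero.1 h1
    have h3 : ghat ⬝ᵥ ghat = 0 := by
      nth_rewrite 2 [h2]
      rw [dotProduct_smul, smul_eq_mul, dotProduct_comm, hqlast_ghat,
        mul_zero]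
    exact hgne (dotProduct_self_eq_zero.1 h3)
  have hqkH : 0 < qk ⬝ᵥ H.mulVec qk := qd qk hqkne
  have hσk_val : σk * (ghat ⬝ᵥ ghat) = qk ⬝ᵥ H.mulVec qk := by
    rw [hσk, hqkg]
    field_simp
  -- determine t by testing the equation against qk
  have hteq : σ * t = -1 := by
    have h1 : qk ⬝ᵥ (σ • pperp + (H.mulVec pQ + M.mulVec pperp))
        = qk ⬝ᵥ (-(H.mulVec x + c)) := by rw [heq1]
    rw [dotProduct_add, dotProduct_add, dotProduct_smul,
      dotProduct_neg, hqkg, neg_neg, hqk_Hs _ hpQK, ht, Matrix.mulVec_smul,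
      dotProduct_smul, dotProduct_smul, hMghat, dotProduct_smul,
      hqk_Hs _ hqlastK, hqkghat] at h1
    simp only [smul_eq_mul, mul_zero, add_zero, zero_add] at h1
    have h2 : (σ * t + 1) * (ghat ⬝ᵥ ghat) = 0 := by ring_nf; ring_nf at h1; linarith
    rcases mul_eq_zero.1 h2 with h | h
    · linarith
    · exact absurd h (ne_of_gt hgg)
  have hσt : t = -1 / σ := by
    field_simp
    linear_combination hteq
  -- the gradient at x + p
  have hHqk : H.mulVec qk = -(H.mulVec ghat) + β • H.mulVec qlast := by
    rw [hqk, Matrix.mulVec_add, Matrix.mulVec_neg, Matrix.mulVec_smul]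
  have hrval : H.mulVec (x + p) + c = -(t • H.mulVec qk) - (σ * t) • ghat := by
    have h1 : H.mulVec pQ = -(H.mulVec x + c) - σ • pperp - M.mulVec pperp := by
      rw [← heq1]; abel
    have h2 : H.mulVec (x + p) + c = (H.mulVec x + c) + (H.mulVec pQ + H.mulVec pperp) := by
      rw [Matrix.mulVec_add]
      conv_lhs => rw [hpdecomp]
      rw [Matrix.mulVec_add]
      abel
    rw [h2, h1, ht, Matrix.mulVec_smul, Matrix.mulVec_smul, hMghat, hHqk]
    module
  have hruKk : ∀ u ∈ krylov g0 H k, (H.mulVec (x + p) + c) ⬝ᵥ u = 0 := by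
    intro u hu
    rw [hrval, sub_dotProduct, neg_dotProduct, smul_dotProduct,
      smul_dotProduct, smul_eq_mul, smul_eq_mul]
    have h1 : H.mulVec qk ⬝ᵥ u = 0 := by
      rw [dotProduct_comm, hds]
      exact hqk_Hs u hu
    rw [h1, hghat_perp u hu]
    ring
  have hrqk : (H.mulVec (x + p) + c) ⬝ᵥ qk
      = -(t * (qk ⬝ᵥ H.mulVec qk)) + σ * t * (ghat ⬝ᵥ ghat) := by
    rw [hrval, sub_dotProduct, neg_dotProduct, smul_dotProduct,
      smul_dotProduct, smul_eq_mul, smul_eq_mul]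
    rw [dotProduct_comm (H.mulVec qk) qk, dotProduct_comm ghat qk, hqkghat]
    ring
  have hqkK1 : qk ∈ krylov g0 H (k + 1) := by
    rw [hqk]
    exact Submodule.add_mem _ (Submodule.neg_mem _ hghatK1)
      (Submodule.smul_mem _ _ (NewtonAux.krylov_mono g0 H (by omega) hqlastK))
  have hmemxp : (x + p) - x0 ∈ krylov g0 H (k + 1) := by
    have h1 : (x + p) - x0 = (x - x0) + (pQ + pperp) := by
      rw [← hpdecomp]; abel
    rw [h1]
    exact Submodule.add_mem _ (NewtonAux.krylov_mono g0 H (by omega) hx)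
      (Submodule.add_mem _ (NewtonAux.krylov_mono g0 H (by omega) hpQK) hppK)
  constructor
  · rintro ⟨hmem', hmin'⟩
    have horth := (NewtonAux.min_iff H hH c f hf _ x0 _ hmem').1 hmin'
    have h0 := horth qk hqkK1
    rw [hrqk] at h0
    -- h0 : -(t * A) + σ * t * gg = 0 with σ * t = -1
    have hA : qk ⬝ᵥ H.mulVec qk = σ * (ghat ⬝ᵥ ghat) := by
      rw [hσt] at h0
      field_simp at h0
      linarith
    have h5 : σ * (ghat ⬝ᵥ ghat) = σk * (ghat ⬝ᵥ ghat) := by rw [hσk_val, hA]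
    exact mul_right_cancel₀ (ne_of_gt hgg) h5
  · intro hσeq
    have hA : qk ⬝ᵥ H.mulVec qk = σ * (ghat ⬝ᵥ ghat) := by
      rw [hσeq, hσk_val]
    have hrqk0 : (H.mulVec (x + p) + c) ⬝ᵥ qk = 0 := by
      rw [hrqk, hA]
      have : σ * t = -1 := hteq
      nlinarith [hteq]
    refine ⟨hmemxp, ?_⟩
    apply (NewtonAux.min_iff H hH c f hf _ x0 _ hmemxp).2
    intro s hs
    rw [hK1] at hs
    obtain ⟨u, hu, v, hv, huv⟩ := Submodule.mem_sup.1 hs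
    obtain ⟨a, rfl⟩ := Submodule.mem_span_singleton.1 hv
    rw [← huv, dotProduct_add, hruKk u hu, zero_add, dotProduct_smul,
      smul_eq_mul]
    have hgh0 : (H.mulVec (x + p) + c) ⬝ᵥ ghat = 0 := by
      have h1 : ghat = -qk + β • qlast := by
        rw [hqk]; module
      rw [h1, dotProduct_add, dotProduct_neg, hrqk0,
        dotProduct_smul, smul_eq_mul,
        hruKk qlast (hqlastK), mul_zero]
      ring
    rw [hgh0, mul_zero]
end

section
/- Conjugate gradient finite termination: let H be symmetric positive definite and define iterates by x_{k+1} = x_k + α_k p_k with p_0 = -g_0, p_k = -g_k + ((g_k^T H p_{k-1})/(p_{k-1}^T H p_{k-1})) p_{k-1}, g_k = H x_k + c, and exact line search α_k = -(g_k^T p_k)/(p_k^T H p_k) (stopping when g_k = 0). Then there exists m ≤ n such that g_m = 0, i.e. x_m = -H^{-1}c. -/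
open Matrix

theorem cg_finite_termination {n : ℕ}
    (H : Matrix (Fin n) (Fin n) ℝ) (hH : H.PosDef)
    (c : Fin n → ℝ)
    (x g p : ℕ → (Fin n → ℝ))
    (α : ℕ → ℝ)
    (hg : ∀ k, g k = H.mulVec (x k) + c)
    (hp0 : p 0 = -(g 0))
    (hα : ∀ k, α k = -(g k ⬝ᵥ p k) / (p k ⬝ᵥ H.mulVec (p k)))
    (hx : ∀ k, (∀ j, j ≤ k → g j ≠ 0) → x (k + 1) = x k + α k • p k)
    (hp : ∀ k, (∀ j, j ≤ k + 1 → g j ≠ 0) →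
      p (k + 1) = -(g (k + 1)) +
        ((g (k + 1) ⬝ᵥ H.mulVec (p k)) / (p k ⬝ᵥ H.mulVec (p k))) • p k) :
    ∃ m : ℕ, m ≤ n ∧ g m = 0 := by
  by_contra hcon
  push_neg at hcon
  -- hcon : ∀ m, m ≤ n → g m ≠ 0
  have hpd : ∀ v : Fin n → ℝ, v ≠ 0 → 0 < v ⬝ᵥ H.mulVec v := fun v hv => by
    simpa using hH.dotProduct_mulVec_pos hv
  have hsym : ∀ u v : Fin n → ℝ, u ⬝ᵥ H.mulVec v = v ⬝ᵥ H.mulVec u := fun u v => by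
    rw [Matrix.dotProduct_mulVec,
      show u ᵥ* H = H *ᵥ u by
        rw [← Matrix.mulVec_transpose, show Hᵀ = H by simpa using hH.1.eq],
      dotProduct_comm]
  have grec : ∀ k, (∀ j, j ≤ k → g j ≠ 0) → g (k + 1) = g k + α k • H.mulVec (p k) := by
    intro k hk
    rw [hg (k + 1), hg k, hx k hk, Matrix.mulVec_add, Matrix.mulVec_smul]
    abel
  have key : ∀ k, k ≤ n →
      (∀ i j, i < j → j ≤ k →
        g i ⬝ᵥ g j = 0 ∧ g j ⬝ᵥ p i = 0 ∧ p i ⬝ᵥ H.mulVec (p j) = 0) ∧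
      (∀ j, j ≤ k → g j ⬝ᵥ p j = -(g j ⬝ᵥ g j)) := by
    intro k
    induction k with
    | zero =>
      intro _
      refine ⟨fun i j hij hj => absurd hj (by omega), fun j hj => ?_⟩
      interval_cases j
      rw [hp0, dotProduct_neg]
    | succ k IH =>
      intro hk1
      have hkn : k ≤ n := by omega
      obtain ⟨inv, selfp⟩ := IH hkn
      have hne' : ∀ j, j ≤ k → g j ≠ 0 := fun j hj => hcon j (hj.trans hkn)
      have hgg : ∀ j, j ≤ k → g j ⬝ᵥ g j ≠ 0 := fun j hj h =>
        hne' j hj (dotProduct_self_eq_zero.mp h)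
      have hpne : ∀ j, j ≤ k → p j ≠ 0 := by
        intro j hj hpj
        have h := selfp j hj
        rw [hpj, dotProduct_zero] at h
        exact hgg j hj (by linarith)
      have hpHp : ∀ j, j ≤ k → 0 < p j ⬝ᵥ H.mulVec (p j) := fun j hj => hpd _ (hpne j hj)
      have hαval : ∀ j, j ≤ k → α j = (g j ⬝ᵥ g j) / (p j ⬝ᵥ H.mulVec (p j)) := by
        intro j hj; rw [hα j, selfp j hj, neg_neg]
      have hαne : ∀ j, j ≤ k → α j ≠ 0 := fun j hj => by
        rw [hαval j hj]; exact div_ne_zero (hgg j hj) (hpHp j hj).ne'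
      have hgrec : g (k + 1) = g k + α k • H.mulVec (p k) := grec k hne'
      have hne1 : ∀ j, j ≤ k + 1 → g j ≠ 0 := fun j hj => hcon j (by omega)
      -- Fact 1 : new gradient orthogonal to all previous directions
      have fact1 : ∀ i, i ≤ k → g (k + 1) ⬝ᵥ p i = 0 := by
        intro i hi
        rw [hgrec, add_dotProduct, smul_dotProduct,
          dotProduct_comm (H.mulVec (p k)) (p i)]
        rcases eq_or_lt_of_le hi with rfl | hik
        · have hd := (hpHp i le_rfl).ne'
          rw [hαval i le_rfl, selfp i le_rfl, smul_eq_mul, div_mul_cancel₀ _ hd]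
          ring
        · rw [(inv i k hik le_rfl).2.1, (inv i k hik le_rfl).2.2]
          simp
      -- Fact 2 : new gradient orthogonal to all previous gradients
      have fact2 : ∀ i, i ≤ k → g (k + 1) ⬝ᵥ g i = 0 := by
        have hgpk1 : ∀ t, t ≤ k → p t ⬝ᵥ g (k + 1) = 0 := fun t ht => by
          rw [dotProduct_comm]; exact fact1 t ht
        intro i hi
        rw [dotProduct_comm]
        match i, hi with
        | 0, _ =>
          have h0 : g 0 = -(p 0) := by rw [hp0, neg_neg]
          rw [h0, neg_dotProduct, hgpk1 0 (Nat.zero_le k), neg_zero]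
        | (t + 1), hi =>
          have hpt := hp t (fun j hj => hne' j (by omega))
          have hgi : g (t + 1) =
              ((g (t + 1) ⬝ᵥ H.mulVec (p t)) / (p t ⬝ᵥ H.mulVec (p t))) • p t - p (t + 1) := by
            rw [hpt]; abel
          rw [hgi, sub_dotProduct, smul_dotProduct, hgpk1 t (by omega),
            hgpk1 (t + 1) hi]
          simp
      -- Fact 3 : new direction H-conjugate to all previous directions
      have fact3 : ∀ i, i ≤ k → p i ⬝ᵥ H.mulVec (p (k + 1)) = 0 := by
        intro i hi
        have hpk1 := hp k hne1
        rw [hpk1, Matrix.mulVec_add, Matrix.mulVec_neg, Matrix.mulVec_smul,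
          dotProduct_add, dotProduct_neg, dotProduct_smul,
          hsym (p i) (g (k + 1))]
        rcases eq_or_lt_of_le hi with rfl | hik
        · have hd := (hpHp i le_rfl).ne'
          rw [smul_eq_mul, div_mul_cancel₀ _ hd]
          ring
        · have h3 : p i ⬝ᵥ H.mulVec (p k) = 0 := (inv i k hik le_rfl).2.2
          have hgreci := grec i (fun j hj => hne' j (by omega))
          have hsub : g (i + 1) - g i = α i • H.mulVec (p i) := by rw [hgreci]; abel
          have hHpi : H.mulVec (p i) = (α i)⁻¹ • (g (i + 1) - g i) := by
            rw [hsub, smul_smul, inv_mul_cancel₀ (hαne i hik.le), one_smul]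
          rw [h3, hHpi, dotProduct_smul, dotProduct_sub,
            fact2 (i + 1) hik, fact2 i hik.le]
          simp
      refine ⟨?_, ?_⟩
      · intro i j hij hjk1
        rcases eq_or_lt_of_le hjk1 with rfl | hjk
        · exact ⟨by rw [dotProduct_comm]; exact fact2 i (by omega),
            fact1 i (by omega), fact3 i (by omega)⟩
        · exact inv i j hij (by omega)
      · intro j hj
        rcases eq_or_lt_of_le hj with rfl | hjk
        · rw [hp k hne1, dotProduct_add, dotProduct_neg,
            dotProduct_smul, fact1 k le_rfl]
          simp
        · exact selfp j (by omega)
  obtain ⟨inv, _⟩ := key n le_rfl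
  have horth : ∀ i j : Fin (n + 1), i ≠ j → g ↑i ⬝ᵥ g ↑j = 0 := by
    intro i j hij
    rcases lt_or_gt_of_ne hij with h | h
    · exact (inv i j h (Nat.lt_succ_iff.mp j.isLt)).1
    · rw [dotProduct_comm]
      exact (inv j i h (Nat.lt_succ_iff.mp i.isLt)).1
  have hli : LinearIndependent ℝ (fun i : Fin (n + 1) => g ↑i) := by
    rw [Fintype.linearIndependent_iff]
    intro cf hcf j
    have h0 : (∑ i : Fin (n + 1), cf i • g ↑i) ⬝ᵥ g ↑j = 0 := by
      rw [hcf, zero_dotProduct]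
    have hsum : (∑ i : Fin (n + 1), cf i • g ↑i) ⬝ᵥ g ↑j
        = ∑ i : Fin (n + 1), cf i * (g ↑i ⬝ᵥ g ↑j) := by
      simp [dotProduct, Finset.sum_apply, Finset.sum_mul, Finset.mul_sum, mul_assoc]
      exact Finset.sum_comm
    rw [hsum, Finset.sum_eq_single j
      (fun i _ hij => by rw [horth i j hij, mul_zero])
      (fun h => absurd (Finset.mem_univ j) h)] at h0
    rcases mul_eq_zero.mp h0 with h | h
    · exact h
    · exact absurd (dotProduct_self_eq_zero.mp h)
        (hcon j (Nat.lt_succ_iff.mp j.isLt))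
  have hcard := hli.fintype_card_le_finrank
  rw [Module.finrank_fintype_fun_eq_card] at hcard
  simp at hcard
end
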